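/- arXiv:2311.07284 — 8 statements merged into one kernel-verified Lean document; each statement's English description precedes it below -/
import Mathlib

section
/- Let A and B be n×r real matrices, each of rank r ≤ n, having the same column space. Then the r×r matrix A†B is invertible and its inverse is B†A, where † denotes the Moore-Penrose pseudo-inverse. -/
open Matrix
/-- The Moore–Penrose pseudo-inverse of a full-column-rank matrix: `M† = (MᵀM)⁻¹Mᵀ`. -/
noncomputable def pinv {m r : ℕ} (M : Matrix (Fin m) (Fin r) ℝ) : Matrix (Fin r) (Fin m) ℝ :=
  (Mᵀ * M)⁻¹ * Mᵀ

lemma isUnit_gram {n r : ℕ} (M : Matrix (Fin n) (Fin r) ℝ) (hM : M.rank = r) :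
    IsUnit (Mᵀ * M) := by
  rw [← Matrix.mulVec_surjective_iff_isUnit]
  have hrank : (Mᵀ * M).rank = r := by rw [Matrix.rank_transpose_mul_self, hM]
  have htop : LinearMap.range (Mᵀ * M).mulVecLin = ⊤ := by
    apply Submodule.eq_top_of_finrank_eq
    rw [← Matrix.rank]
    simp [hrank]
  intro v
  have : v ∈ LinearMap.range (Mᵀ * M).mulVecLin := htop ▸ Submodule.mem_top
  obtain ⟨w, hw⟩ := this
  exact ⟨w, hw⟩

lemma pinv_mul_self {n r : ℕ} (M : Matrix (Fin n) (Fin r) ℝ) (hM : M.rank = r) :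
    pinv M * M = 1 := by
  rw [pinv, Matrix.mul_assoc, Matrix.nonsing_inv_mul]
  exact (Matrix.isUnit_iff_isUnit_det _).mp (isUnit_gram M hM)

lemma proj_fix {n r : ℕ} (M N : Matrix (Fin n) (Fin r) ℝ) (hM : M.rank = r)
    (hsub : LinearMap.range N.mulVecLin ≤ LinearMap.range M.mulVecLin) :
    M * (pinv M * N) = N := by
  have hpm : pinv M * M = 1 := pinv_mul_self M hM
  have key : ∀ v, (M * (pinv M * N)) *ᵥ v = N *ᵥ v := by
    intro v
    have : N *ᵥ v ∈ LinearMap.range M.mulVecLin := hsub ⟨v, rfl⟩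
    obtain ⟨w, hw⟩ := this
    simp only [Matrix.mulVecLin_apply] at hw
    have h2 : pinv M *ᵥ (M *ᵥ w) = w := by
      rw [Matrix.mulVec_mulVec, hpm, Matrix.one_mulVec]
    rw [← Matrix.mulVec_mulVec, ← Matrix.mulVec_mulVec, ← hw, h2]
  ext i j
  have := key (Pi.single j 1)
  simpa [Matrix.mulVec_single] using congrFun this i

theorem stmt2 {n r : ℕ} (hr : r ≤ n) (A B : Matrix (Fin n) (Fin r) ℝ)
    (hA : A.rank = r) (hB : B.rank = r)
    (hcol : LinearMap.range A.mulVecLin = LinearMap.range B.mulVecLin) :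
    (pinv A * B) * (pinv B * A) = 1 ∧ (pinv B * A) * (pinv A * B) = 1 := by
  have h1 : B * (pinv B * A) = A := proj_fix B A hB (le_of_eq hcol)
  have h2 : A * (pinv A * B) = B := proj_fix A B hA (le_of_eq hcol.symm)
  constructor
  · calc (pinv A * B) * (pinv B * A) = pinv A * (B * (pinv B * A)) := by
          rw [Matrix.mul_assoc]
      _ = pinv A * A := by rw [h1]
      _ = 1 := pinv_mul_self A hA
  · calc (pinv B * A) * (pinv A * B) = pinv B * (A * (pinv A * B)) := by
          rw [Matrix.mul_assoc]
      _ = pinv B * B := by rw [h2]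
      _ = 1 := pinv_mul_self B hB
end

section
/- Let A, E be m×n real matrices with m ≥ n, and let Ã = A + E. If rank(A) = n and ‖E‖ ≤ σ_n(A)/2 (where σ_n(A) is the smallest singular value of A), then ‖A† − Ã†‖ ≤ 3‖A†‖²‖E‖. -/
open Matrix

/-- Operator (spectral) norm of a matrix, via its action between Euclidean spaces. -/
noncomputable def opNorm {m r : ℕ} (A : Matrix (Fin m) (Fin r) ℝ) : ℝ :=
  ‖LinearMap.toContinuousLinearMap (Matrix.toEuclideanLin A)‖

/-- The smallest singular value `σ_r(A)` of an `m × r` matrix (`r ≤ m`),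
characterized as the infimum of `‖Ax‖` over unit vectors `x`. -/
noncomputable def leastSingular {m r : ℕ} (A : Matrix (Fin m) (Fin r) ℝ) : ℝ :=
  sInf {c | ∃ x : EuclideanSpace ℝ (Fin r), ‖x‖ = 1 ∧ c = ‖Matrix.toEuclideanLin A x‖}

namespace Stmt4Aux

open scoped Matrix.Norms.L2Operator RealInnerProductSpace

variable {m r : ℕ}

lemma opNorm_eq (M : Matrix (Fin m) (Fin r) ℝ) : opNorm M = ‖M‖ := rfl

lemma apply_mul {k : ℕ} (M : Matrix (Fin m) (Fin r) ℝ) (N : Matrix (Fin r) (Fin k) ℝ)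
    (x : EuclideanSpace ℝ (Fin k)) :
    toEuclideanLin (M * N) x = toEuclideanLin M (toEuclideanLin N x) := by
  simp [toEuclideanLin_apply, mulVec_mulVec]

lemma apply_one (x : EuclideanSpace ℝ (Fin r)) :
    toEuclideanLin (1 : Matrix (Fin r) (Fin r) ℝ) x = x := by
  simp [toEuclideanLin_apply]

lemma norm_apply_le (M : Matrix (Fin m) (Fin r) ℝ) (x : EuclideanSpace ℝ (Fin r)) :
    ‖toEuclideanLin M x‖ ≤ ‖M‖ * ‖x‖ :=
  (LinearMap.toContinuousLinearMap (toEuclideanLin M)).le_opNorm x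

lemma norm_le_bound (M : Matrix (Fin m) (Fin r) ℝ) (c : ℝ) (hc : 0 ≤ c)
    (h : ∀ x, ‖toEuclideanLin M x‖ ≤ c * ‖x‖) : ‖M‖ ≤ c :=
  ContinuousLinearMap.opNorm_le_bound _ hc h

lemma norm_transpose (M : Matrix (Fin m) (Fin r) ℝ) : ‖Mᵀ‖ = ‖M‖ := by
  rw [← conjTranspose_eq_transpose_of_trivial]; exact l2_opNorm_conjTranspose M

section LS
variable (A : Matrix (Fin m) (Fin r) ℝ)

lemma ls_bdd :
    BddBelow {c | ∃ x : EuclideanSpace ℝ (Fin r), ‖x‖ = 1 ∧ c = ‖Matrix.toEuclideanLin A x‖} :=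
  ⟨0, fun _ ⟨_, _, hc⟩ => hc ▸ norm_nonneg _⟩

lemma ls_le {x : EuclideanSpace ℝ (Fin r)} (hx : ‖x‖ = 1) :
    leastSingular A ≤ ‖toEuclideanLin A x‖ :=
  csInf_le (ls_bdd A) ⟨x, hx, rfl⟩

lemma ls_mul_norm_le (x : EuclideanSpace ℝ (Fin r)) :
    leastSingular A * ‖x‖ ≤ ‖toEuclideanLin A x‖ := by
  rcases eq_or_ne x 0 with rfl | hx
  · simp
  · have hnx : ‖x‖ ≠ 0 := norm_ne_zero_iff.2 hx
    have hu : ‖(‖x‖⁻¹ • x : EuclideanSpace ℝ (Fin r))‖ = 1 := by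
      simp [norm_smul, abs_of_pos (inv_pos.2 (norm_pos_iff.2 hx)), inv_mul_cancel₀ hnx]
    have h := ls_le A hu
    rw [_root_.map_smul, norm_smul, norm_inv, norm_norm] at h
    have hpos : (0:ℝ) < ‖x‖ := norm_pos_iff.2 hx
    calc leastSingular A * ‖x‖ ≤ (‖x‖⁻¹ * ‖toEuclideanLin A x‖) * ‖x‖ := by nlinarith
      _ = ‖toEuclideanLin A x‖ := by field_simp

lemma exists_unit (hr : 0 < r) : ∃ x : EuclideanSpace ℝ (Fin r), ‖x‖ = 1 := by
  refine ⟨EuclideanSpace.single ⟨0, hr⟩ (1:ℝ), ?_⟩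
  simp [EuclideanSpace.norm_single]

lemma le_ls (hr : 0 < r) {c : ℝ}
    (h : ∀ x : EuclideanSpace ℝ (Fin r), ‖x‖ = 1 → c ≤ ‖toEuclideanLin A x‖) :
    c ≤ leastSingular A := by
  obtain ⟨x, hx⟩ := exists_unit hr
  exact le_csInf ⟨_, ⟨x, hx, rfl⟩⟩ (fun b ⟨y, hy, hb⟩ => hb ▸ h y hy)

lemma exists_min (hr : 0 < r) :
    ∃ x : EuclideanSpace ℝ (Fin r), ‖x‖ = 1 ∧ ‖toEuclideanLin A x‖ = leastSingular A := by
  obtain ⟨u, hu⟩ := exists_unit hr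
  have hsc : IsCompact (Metric.sphere (0 : EuclideanSpace ℝ (Fin r)) 1) := isCompact_sphere _ _
  have hcont : Continuous fun x : EuclideanSpace ℝ (Fin r) => ‖toEuclideanLin A x‖ :=
    ((LinearMap.toContinuousLinearMap (toEuclideanLin A)).continuous).norm
  obtain ⟨x, hxs, hmin⟩ := hsc.exists_isMinOn ⟨u, by simpa using hu⟩ hcont.continuousOn
  have hx1 : ‖x‖ = 1 := by simpa using hxs
  refine ⟨x, hx1, le_antisymm ?_ (ls_le A hx1)⟩
  exact le_ls A hr fun y hy => hmin (by simpa using hy)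

lemma inj_toEuc_of_ls_pos (h : 0 < leastSingular A) : Function.Injective (toEuclideanLin A) := by
  intro a b hab
  have h1 := ls_mul_norm_le A (a - b)
  rw [map_sub, hab, sub_self, norm_zero] at h1
  have h2 : ‖a - b‖ ≤ 0 := by nlinarith [norm_nonneg (a - b)]
  exact sub_eq_zero.1 (norm_eq_zero.1 (le_antisymm h2 (norm_nonneg _)))

lemma inj_mulVec_of_ls_pos (h : 0 < leastSingular A) : Function.Injective A.mulVec := by
  intro x y hxy
  have h2 : toEuclideanLin A ((WithLp.equiv 2 _).symm x)
      = toEuclideanLin A ((WithLp.equiv 2 _).symm y) := by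
    simp [toEuclideanLin_apply_piLp_toLp, hxy]
  have h3 := inj_toEuc_of_ls_pos A h h2
  simpa using congrArg (WithLp.equiv 2 _) h3

lemma isUnit_tmul (h : Function.Injective A.mulVec) : IsUnit (Aᵀ * A) := by
  rw [← mulVec_injective_iff_isUnit]
  intro x y hxy
  apply h
  have hv : Aᵀ *ᵥ (A *ᵥ (x - y)) = 0 := by
    simp [mulVec_mulVec, mulVec_sub, hxy]
  have hdot : (A *ᵥ (x - y)) ⬝ᵥ (A *ᵥ (x - y)) = 0 := by
    rw [dotProduct_mulVec, ← mulVec_transpose, hv, zero_dotProduct]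
  have h0 : A *ᵥ (x - y) = 0 := dotProduct_self_eq_zero.1 hdot
  rw [mulVec_sub, sub_eq_zero] at h0
  exact h0

lemma inv_mul_tmul (h : Function.Injective A.mulVec) : (Aᵀ * A)⁻¹ * (Aᵀ * A) = 1 :=
  nonsing_inv_mul _ (isUnit_iff_isUnit_det _ |>.1 (isUnit_tmul A h))

lemma mul_inv_tmul (h : Function.Injective A.mulVec) : (Aᵀ * A) * (Aᵀ * A)⁻¹ = 1 :=
  mul_nonsing_inv _ (isUnit_iff_isUnit_det _ |>.1 (isUnit_tmul A h))

end LS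

set_option maxHeartbeats 1000000 in
/-- The key projection estimate: `σ_min(B) ⬝ ‖B† y‖ ≤ ‖y‖`. -/
lemma norm_pinv_apply_le (B : Matrix (Fin m) (Fin r) ℝ) {σ : ℝ}
    (hls : ∀ x : EuclideanSpace ℝ (Fin r), σ * ‖x‖ ≤ ‖toEuclideanLin B x‖)
    (hinv : (Bᵀ * B)⁻¹ * (Bᵀ * B) = 1)
    (y : EuclideanSpace ℝ (Fin m)) :
    σ * ‖toEuclideanLin (pinv B) y‖ ≤ ‖y‖ := by
  set f := toEuclideanLin B with hf
  set K := LinearMap.range f with hK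
  set p : EuclideanSpace ℝ (Fin m) := (K.orthogonalProjectionOnto y : EuclideanSpace ℝ (Fin m)) with hp
  obtain ⟨x, hx⟩ : p ∈ K := (K.orthogonalProjectionOnto y).2
  have hq : y - p ∈ Kᗮ := K.sub_starProjection_mem_orthogonal y
  have hadj : toEuclideanLin Bᵀ (y - p) = 0 := by
    have he : toEuclideanLin Bᵀ = LinearMap.adjoint f := by
      rw [← conjTranspose_eq_transpose_of_trivial, toEuclideanLin_conjTranspose_eq_adjoint]
    rw [he]
    refine inner_self_eq_zero (𝕜 := ℝ).1 ?_
    rw [LinearMap.adjoint_inner_left]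
    exact (Submodule.mem_orthogonal' K _).1 hq _ (LinearMap.mem_range_self f _)
  have h1 : toEuclideanLin (pinv B) y
      = toEuclideanLin ((Bᵀ * B)⁻¹) (toEuclideanLin Bᵀ y) := by
    rw [pinv, apply_mul]
  have h2 : toEuclideanLin Bᵀ y = toEuclideanLin Bᵀ p := by
    have h5 := map_sub (toEuclideanLin Bᵀ) y p
    rw [hadj] at h5
    linear_combination (norm := module) -h5
  have hval : toEuclideanLin (pinv B) y = x := by
    calc toEuclideanLin (pinv B) y
        = toEuclideanLin ((Bᵀ * B)⁻¹) (toEuclideanLin Bᵀ (toEuclideanLin B x)) := by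
          rw [h1, h2, ← hx]
      _ = toEuclideanLin ((Bᵀ * B)⁻¹ * Bᵀ * B) x := by rw [← apply_mul, ← apply_mul]
      _ = x := by rw [Matrix.mul_assoc, hinv, apply_one]
  have h3 : ‖K.orthogonalProjectionOnto y‖ ≤ ‖y‖ := by
    calc ‖K.orthogonalProjectionOnto y‖ ≤ ‖K.orthogonalProjectionOnto‖ * ‖y‖ :=
          (K.orthogonalProjectionOnto).le_opNorm y
      _ ≤ 1 * ‖y‖ := mul_le_mul_of_nonneg_right (K.orthogonalProjectionOnto_norm_le) (norm_nonneg _)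
      _ = ‖y‖ := one_mul _
  have hnp : ‖p‖ ≤ ‖y‖ := h3
  have h4 : σ * ‖x‖ ≤ ‖p‖ := hx ▸ hls x
  rw [hval]
  linarith

section Wedin
variable {n : ℕ} (A B : Matrix (Fin m) (Fin n) ℝ)

/-- A Wedin-type decomposition of the difference of pseudo-inverses. -/
lemma wedin (hA : (Aᵀ * A)⁻¹ * (Aᵀ * A) = 1) (hB : (Bᵀ * B) * (Bᵀ * B)⁻¹ = 1) :
    pinv A - pinv B
      = pinv A * (B - A) * pinv B - (Aᵀ * A)⁻¹ * (B - A)ᵀ * (1 - B * pinv B) := by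
  have key1 : (Aᵀ * A)⁻¹ * (Aᵀ * (A * ((Bᵀ * B)⁻¹ * Bᵀ)))
      = (Bᵀ * B)⁻¹ * Bᵀ := by
    rw [← Matrix.mul_assoc Aᵀ A ((Bᵀ * B)⁻¹ * Bᵀ), ← Matrix.mul_assoc, hA, Matrix.one_mul]
  have key2 : Bᵀ * (B * ((Bᵀ * B)⁻¹ * Bᵀ)) = Bᵀ := by
    rw [← Matrix.mul_assoc B, ← Matrix.mul_assoc Bᵀ, ← Matrix.mul_assoc, hB, Matrix.one_mul]
  simp only [pinv, transpose_sub, Matrix.sub_mul, Matrix.mul_sub, Matrix.mul_one, Matrix.mul_assoc]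
  rw [key2, key1]
  abel

/-- `1 - B B†` is an orthogonal projection, hence has norm at most `1`. -/
lemma norm_proj_le (hB : (Bᵀ * B) * (Bᵀ * B)⁻¹ = 1) (hB2 : (Bᵀ * B)⁻¹ * (Bᵀ * B) = 1) :
    ‖(1 : Matrix (Fin m) (Fin m) ℝ) - B * pinv B‖ ≤ 1 := by
  set Q : Matrix (Fin m) (Fin m) ℝ := 1 - B * pinv B with hQ
  have hsym : Qᵀ = Q := by
    rw [hQ, transpose_sub, transpose_one, transpose_mul, pinv, transpose_mul,
      transpose_nonsing_inv, transpose_mul, transpose_transpose, Matrix.mul_assoc]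
  have hidem : Q * Q = Q := by
    have h1 : (B * pinv B) * (B * pinv B) = B * pinv B := by
      rw [pinv, ← Matrix.mul_assoc, Matrix.mul_assoc B _ B, Matrix.mul_assoc (Bᵀ*B)⁻¹ Bᵀ B,
        Matrix.mul_assoc B, hB2, Matrix.one_mul]
    simp only [hQ, Matrix.sub_mul, Matrix.mul_sub, Matrix.one_mul, Matrix.mul_one, h1]
    abel
  have hsq : ‖Q‖ * ‖Q‖ = ‖Q‖ := by
    have h := l2_opNorm_conjTranspose_mul_self Q
    rw [conjTranspose_eq_transpose_of_trivial, hsym, hidem] at h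
    linarith
  nlinarith [norm_nonneg Q]

/-- `(AᵀA)⁻¹ = A† (A†)ᵀ`. -/
lemma inv_eq_pinv_mul (hA : (Aᵀ * A)⁻¹ * (Aᵀ * A) = 1) :
    (Aᵀ * A)⁻¹ = pinv A * (pinv A)ᵀ := by
  rw [pinv, transpose_mul, transpose_transpose, transpose_nonsing_inv, transpose_mul,
    transpose_transpose]
  rw [Matrix.mul_assoc, ← Matrix.mul_assoc Aᵀ A, ← Matrix.mul_assoc, hA, Matrix.one_mul]

end Wedin

end Stmt4Aux

open Stmt4Aux in
open scoped Matrix.Norms.L2Operator in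
set_option maxHeartbeats 1000000 in
theorem stmt4 {m n : ℕ} (hmn : n ≤ m) (A E : Matrix (Fin m) (Fin n) ℝ)
    (hA : A.rank = n) (hE : opNorm E ≤ leastSingular A / 2) :
    opNorm (pinv A - pinv (A + E)) ≤ 3 * opNorm (pinv A) ^ 2 * opNorm E := by
  rcases Nat.eq_zero_or_pos n with hn0 | hn
  · subst hn0
    have hz : pinv A - pinv (A + E) = 0 := Subsingleton.elim _ _
    rw [hz, opNorm_eq, norm_zero]
    simp only [opNorm_eq]
    positivity
  -- notation
  set B := A + E with hB
  set σ := leastSingular A with hσdef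
  -- A has injective mulVec
  have hAinj : Function.Injective A.mulVec := by
    have hrk : Module.finrank ℝ (LinearMap.range A.mulVecLin) = n := hA
    have hrn := LinearMap.finrank_range_add_finrank_ker A.mulVecLin
    rw [hrk] at hrn
    have hfin : Module.finrank ℝ (Fin n → ℝ) = n := Module.finrank_fin_fun ℝ
    rw [hfin] at hrn
    have hker : LinearMap.ker A.mulVecLin = ⊥ :=
      Submodule.finrank_eq_zero.1 (by omega)
    have := LinearMap.ker_eq_bot.1 hker
    exact this
  -- injectivity of toEuclideanLin A
  have hAeinj : Function.Injective (toEuclideanLin A) := by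
    intro a b hab
    have h2 : A *ᵥ (WithLp.equiv 2 _) a = A *ᵥ (WithLp.equiv 2 _) b := by
      have := congrArg (WithLp.equiv 2 _) hab
      simpa [ofLp_toEuclideanLin_apply] using this
    have := hAinj h2
    exact (WithLp.equiv 2 _).injective this
  -- σ > 0
  have hσpos : 0 < σ := by
    obtain ⟨x₀, hx₀1, hx₀⟩ := exists_min A hn
    have hne : toEuclideanLin A x₀ ≠ 0 := by
      intro hcontra
      have : x₀ = 0 := by
        apply hAeinj
        rw [hcontra, map_zero]
      rw [this, norm_zero] at hx₀1
      norm_num at hx₀1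
    rw [hσdef, ← hx₀]
    exact norm_pos_iff.2 hne
  have hE' : ‖E‖ ≤ σ / 2 := hE
  have hEnn : (0:ℝ) ≤ ‖E‖ := norm_nonneg _
  -- least singular value of B
  have hlsB : σ - ‖E‖ ≤ leastSingular B := by
    refine le_ls B hn fun x hx => ?_
    have hadd : toEuclideanLin B x = toEuclideanLin A x + toEuclideanLin E x := by
      rw [hB, map_add]; rfl
    have h1 : σ * ‖x‖ ≤ ‖toEuclideanLin A x‖ := ls_mul_norm_le A x
    have h2 : ‖toEuclideanLin E x‖ ≤ ‖E‖ * ‖x‖ := norm_apply_le E x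
    have h3 : ‖toEuclideanLin A x‖ ≤ ‖toEuclideanLin B x‖ + ‖toEuclideanLin E x‖ := by
      calc ‖toEuclideanLin A x‖ = ‖toEuclideanLin B x - toEuclideanLin E x‖ := by
            rw [hadd, add_sub_cancel_right]
          _ ≤ ‖toEuclideanLin B x‖ + ‖toEuclideanLin E x‖ := norm_sub_le _ _
    rw [hx] at h1 h2
    linarith
  have hσ'pos : 0 < leastSingular B := by linarith
  have hBinj : Function.Injective B.mulVec := inj_mulVec_of_ls_pos B hσ'pos
  -- invertibility facts
  have hAi : (Aᵀ * A)⁻¹ * (Aᵀ * A) = 1 := inv_mul_tmul A hAinj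
  have hBi : (Bᵀ * B)⁻¹ * (Bᵀ * B) = 1 := inv_mul_tmul B hBinj
  have hBi' : (Bᵀ * B) * (Bᵀ * B)⁻¹ = 1 := mul_inv_tmul B hBinj
  -- abbreviations for norms
  set α := ‖pinv A‖ with hα
  set β := ‖pinv B‖ with hβ
  have hαnn : (0:ℝ) ≤ α := norm_nonneg _
  have hβnn : (0:ℝ) ≤ β := norm_nonneg _
  -- bound: β ≤ (leastSingular B)⁻¹, i.e. leastSingular B * β ≤ 1
  have hβb : leastSingular B * β ≤ 1 := by
    have hb : β ≤ (leastSingular B)⁻¹ := by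
      refine norm_le_bound _ _ (by positivity) fun y => ?_
      have h6 := norm_pinv_apply_le B (ls_mul_norm_le B) hBi y
      have h7 : ‖toEuclideanLin (pinv B) y‖
          = (leastSingular B)⁻¹ * (leastSingular B * ‖toEuclideanLin (pinv B) y‖) := by
        field_simp
      rw [h7]
      exact mul_le_mul_of_nonneg_left h6 (by positivity)
    calc leastSingular B * β ≤ leastSingular B * (leastSingular B)⁻¹ :=
          mul_le_mul_of_nonneg_left hb (le_of_lt hσ'pos)
      _ = 1 := mul_inv_cancel₀ (ne_of_gt hσ'pos)
  -- bound: 1 ≤ α * σ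
  have hab : 1 ≤ α * σ := by
    obtain ⟨x₀, hx₀1, hx₀⟩ := exists_min A hn
    have hid : toEuclideanLin (pinv A) (toEuclideanLin A x₀) = x₀ := by
      rw [← apply_mul, pinv, Matrix.mul_assoc, hAi, apply_one]
    have h1 : ‖toEuclideanLin (pinv A) (toEuclideanLin A x₀)‖ ≤ α * ‖toEuclideanLin A x₀‖ :=
      norm_apply_le _ _
    rw [hid, hx₀1, hx₀] at h1
    exact h1
  -- bound: β ≤ 2 * α
  have hβ2α : β ≤ 2 * α := by
    have h1 : leastSingular B ≥ σ / 2 := by linarith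
    have h2 : (σ / 2) * β ≤ 1 := by nlinarith
    nlinarith
  -- the Wedin identity with E = B - A
  have hBA : B - A = E := by rw [hB, add_sub_cancel_left]
  have hw := wedin A B hAi hBi'
  rw [hBA] at hw
  -- norm bounds on the two terms
  have ht1 : ‖pinv A * E * pinv B‖ ≤ α * ‖E‖ * β := by
    calc ‖pinv A * E * pinv B‖ ≤ ‖pinv A * E‖ * β := l2_opNorm_mul _ _
      _ ≤ (α * ‖E‖) * β := by
          have := l2_opNorm_mul (pinv A) E
          exact mul_le_mul_of_nonneg_right this hβnn
      _ = α * ‖E‖ * β := rfl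
  have hinv2 : ‖(Aᵀ * A)⁻¹‖ ≤ α * α := by
    rw [inv_eq_pinv_mul A hAi]
    calc ‖pinv A * (pinv A)ᵀ‖ ≤ ‖pinv A‖ * ‖(pinv A)ᵀ‖ := l2_opNorm_mul _ _
      _ = α * α := by rw [Stmt4Aux.norm_transpose]
  have hproj : ‖(1 : Matrix (Fin m) (Fin m) ℝ) - B * pinv B‖ ≤ 1 := norm_proj_le B hBi' hBi
  have ht2 : ‖(Aᵀ * A)⁻¹ * Eᵀ * (1 - B * pinv B)‖ ≤ α * α * ‖E‖ := by
    have hEt : ‖Eᵀ‖ = ‖E‖ := Stmt4Aux.norm_transpose E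
    calc ‖(Aᵀ * A)⁻¹ * Eᵀ * (1 - B * pinv B)‖
        ≤ ‖(Aᵀ * A)⁻¹ * Eᵀ‖ * ‖(1 : Matrix (Fin m) (Fin m) ℝ) - B * pinv B‖ :=
          l2_opNorm_mul _ _
      _ ≤ ‖(Aᵀ * A)⁻¹ * Eᵀ‖ * 1 :=
          mul_le_mul_of_nonneg_left hproj (norm_nonneg _)
      _ = ‖(Aᵀ * A)⁻¹ * Eᵀ‖ := mul_one _
      _ ≤ ‖(Aᵀ * A)⁻¹‖ * ‖Eᵀ‖ := l2_opNorm_mul _ _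
      _ ≤ (α * α) * ‖E‖ := by
          rw [hEt]
          exact mul_le_mul_of_nonneg_right hinv2 hEnn
  -- assemble
  rw [opNorm_eq, hw]
  have htri : ‖pinv A * E * pinv B - (Aᵀ * A)⁻¹ * Eᵀ * (1 - B * pinv B)‖
      ≤ ‖pinv A * E * pinv B‖ + ‖(Aᵀ * A)⁻¹ * Eᵀ * (1 - B * pinv B)‖ := norm_sub_le _ _
  have h9 : α * ‖E‖ * β ≤ α * ‖E‖ * (2 * α) :=
    mul_le_mul_of_nonneg_left hβ2α (mul_nonneg hαnn hEnn)
  have hfinal : α * ‖E‖ * β + α * α * ‖E‖ ≤ 3 * α ^ 2 * ‖E‖ := by nlinarith [h9]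
  calc ‖pinv A * E * pinv B - (Aᵀ * A)⁻¹ * Eᵀ * (1 - B * pinv B)‖
      ≤ α * ‖E‖ * β + α * α * ‖E‖ := by linarith
    _ ≤ 3 * α ^ 2 * ‖E‖ := hfinal
    _ = 3 * opNorm (pinv A) ^ 2 * opNorm E := by rw [opNorm_eq, opNorm_eq, hα]
end

section
/- Let x = (x_1,...,x_n) with each x_i an independent standard Gaussian, and let y = x/‖x‖. Then for any nonzero a ∈ R^n and any δ ≥ 0, the probability that |aᵀy| ≤ δ‖a‖/(6√(n + ln(1/δ))) is at most δ. -/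
open MeasureTheory ProbabilityTheory
open Real
open scoped NNReal ENNReal

lemma pdf_conv {v w : ℝ≥0} (hv : v ≠ 0) (hw : w ≠ 0) (y : ℝ) :
    ∫ x, gaussianPDFReal 0 v x * gaussianPDFReal 0 w (y - x) = gaussianPDFReal 0 (v + w) y := by
  have hv' : (0:ℝ) < v := lt_of_le_of_ne v.coe_nonneg (by exact_mod_cast (Ne.symm hv))
  have hw' : (0:ℝ) < w := lt_of_le_of_ne w.coe_nonneg (by exact_mod_cast (Ne.symm hw))
  have hvw : (0:ℝ) < (v:ℝ) + w := by positivity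
  set b : ℝ := ((v:ℝ)+w)/(2*v*w) with hbdef
  have hb : 0 < b := by positivity
  set c : ℝ := v*y/((v:ℝ)+w) with hcdef
  have hconst : (√(2*π*(v:ℝ)))⁻¹ * (√(2*π*(w:ℝ)))⁻¹
      = (√(2*π*((v:ℝ)+w)))⁻¹ * (√(π/b))⁻¹ := by
    rw [← mul_inv, ← mul_inv, ← Real.sqrt_mul (by positivity), ← Real.sqrt_mul (by positivity)]
    congr 2
    rw [hbdef]
    field_simp
  have hexp : ∀ x : ℝ, -x^2/(2*(v:ℝ)) + -(y-x)^2/(2*(w:ℝ))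
      = -y^2/(2*((v:ℝ)+w)) + -b*(x-c)^2 := by
    intro x
    rw [hbdef, hcdef]
    field_simp
    ring
  have key : ∀ x, gaussianPDFReal 0 v x * gaussianPDFReal 0 w (y - x)
      = gaussianPDFReal 0 (v+w) y * ((√(π/b))⁻¹ * rexp (-b*(x-c)^2)) := by
    intro x
    simp only [gaussianPDFReal, sub_zero, NNReal.coe_add]
    rw [mul_mul_mul_comm, ← Real.exp_add, hconst, hexp x, Real.exp_add]
    ring
  simp_rw [key]
  rw [integral_const_mul, integral_const_mul,
    integral_sub_right_eq_self (fun t => rexp (-b*t^2)) c, integral_gaussian,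
    inv_mul_cancel₀ (by positivity), mul_one]


lemma pdf_le (w : ℝ≥0) (t : ℝ) : gaussianPDFReal 0 w t ≤ (√(2*π*(w:ℝ)))⁻¹ := by
  rw [gaussianPDFReal, sub_zero]
  exact mul_le_of_le_one_right (by positivity)
    (Real.exp_le_one_iff.2 (div_nonpos_of_nonpos_of_nonneg (neg_nonpos.2 (sq_nonneg t))
      (by positivity)))

lemma gauss_conv (v w : ℝ≥0) :
    Measure.map (fun p : ℝ × ℝ => p.1 + p.2) ((gaussianReal 0 v).prod (gaussianReal 0 w))
      = gaussianReal 0 (v + w) := by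
  by_cases hv : v = 0
  · subst hv
    rw [gaussianReal_zero_var, Measure.dirac_prod, Measure.map_map (by fun_prop) (by fun_prop)]
    simp only [zero_add, Function.comp_def]
    simp [zero_add]
  by_cases hw : w = 0
  · subst hw
    rw [gaussianReal_zero_var, Measure.prod_dirac, Measure.map_map (by fun_prop) (by fun_prop)]
    simp only [add_zero, Function.comp_def]
    simp [add_zero]
  have hvw : v + w ≠ 0 := by simp [hv]
  have hpdfm : Measurable fun q : ℝ × ℝ => ENNReal.ofReal (gaussianPDFReal 0 w (q.2 - q.1)) := by
    apply Measurable.ennreal_ofReal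
    exact (measurable_gaussianPDFReal 0 w).comp (measurable_snd.sub measurable_fst)
  ext s hs
  rw [Measure.map_apply (by fun_prop) hs, Measure.prod_apply (measurable_add hs)]
  have h1 : ∀ x : ℝ, (Prod.mk x ⁻¹' ((fun p : ℝ × ℝ => p.1 + p.2) ⁻¹' s))
      = (fun y => x + y) ⁻¹' s := fun x => rfl
  have h2 : ∀ x : ℝ, gaussianReal 0 w ((fun y => x + y) ⁻¹' s)
      = ∫⁻ y in s, ENNReal.ofReal (gaussianPDFReal 0 w (y - x)) := by
    intro x
    rw [← Measure.map_apply (by fun_prop) hs, gaussianReal_map_const_add,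
      zero_add, gaussianReal_apply _ hw]
    congr 1 with y
    rw [gaussianPDF, gaussianPDFReal_sub, zero_add]
  simp_rw [h1, h2]
  have hinner : Measurable fun x => ∫⁻ y in s, ENNReal.ofReal (gaussianPDFReal 0 w (y - x)) :=
    Measurable.lintegral_prod_right (f := fun x y => ENNReal.ofReal (gaussianPDFReal 0 w (y - x)))
      hpdfm
  rw [gaussianReal_of_var_ne_zero _ hv,
    lintegral_withDensity_eq_lintegral_mul _ (measurable_gaussianPDF _ _) hinner]
  simp only [Pi.mul_apply]
  have h3 : ∀ x : ℝ, gaussianPDF 0 v x * ∫⁻ y in s, ENNReal.ofReal (gaussianPDFReal 0 w (y - x))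
      = ∫⁻ y in s, ENNReal.ofReal (gaussianPDFReal 0 v x * gaussianPDFReal 0 w (y - x)) := by
    intro x
    have hm : Measurable fun y : ℝ => ENNReal.ofReal (gaussianPDFReal 0 w (y - x)) :=
      ((measurable_gaussianPDFReal 0 w).comp (measurable_id.sub measurable_const)).ennreal_ofReal
    rw [← lintegral_const_mul _ hm]
    congr 1 with y
    rw [gaussianPDF, ← ENNReal.ofReal_mul (gaussianPDFReal_nonneg _ _ _)]
  simp_rw [h3]
  rw [lintegral_lintegral_swap]
  swap
  · exact (Measurable.ennreal_ofReal ((measurable_gaussianPDFReal 0 v).comp measurable_fst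
      |>.mul ((measurable_gaussianPDFReal 0 w).comp (measurable_snd.sub measurable_fst)))).aemeasurable
  rw [gaussianReal_apply _ hvw]
  congr 1 with y
  have hint : Integrable fun x => gaussianPDFReal 0 v x * gaussianPDFReal 0 w (y - x) := by
    have : Integrable fun x => gaussianPDFReal 0 w (y - x) * gaussianPDFReal 0 v x :=
      Integrable.bdd_mul (integrable_gaussianPDFReal 0 v)
        (((measurable_gaussianPDFReal 0 w).comp (measurable_const.sub measurable_id)).aestronglyMeasurable)
        (c := (√(2*π*(w:ℝ)))⁻¹) (ae_of_all _ fun x => by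
          rw [Real.norm_eq_abs, abs_of_nonneg (gaussianPDFReal_nonneg _ _ _)]
          exact pdf_le w _)
    simpa [mul_comm] using this
  rw [← ofReal_integral_eq_lintegral_ofReal hint
      (ae_of_all _ fun x => mul_nonneg (gaussianPDFReal_nonneg _ _ _) (gaussianPDFReal_nonneg _ _ _)),
    pdf_conv hv hw y, gaussianPDF]

lemma map_linear : ∀ (n : ℕ) (a : Fin n → ℝ),
    Measure.map (fun x : Fin n → ℝ => ∑ i, a i * x i)
      (Measure.pi fun _ : Fin n => gaussianReal 0 1)
      = gaussianReal 0 (NNReal.mk (∑ i, a i ^ 2) (Finset.sum_nonneg fun i _ => sq_nonneg _)) := by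
  intro n
  induction n with
  | zero =>
    intro a
    have h : (fun x : Fin 0 → ℝ => ∑ i, a i * x i) = fun _ => 0 := by
      funext x; simp
    rw [h, Measure.map_const]
    have : NNReal.mk (∑ i, a i ^ 2) (Finset.sum_nonneg fun i _ => sq_nonneg _) = 0 := by
      ext; simp
    rw [this]; simp [gaussianReal_zero_var]
  | succ n ih =>
    intro a
    set e := MeasurableEquiv.piFinSuccAbove (fun _ : Fin (n+1) => ℝ) 0 with he
    have hmp := measurePreserving_piFinSuccAbove (fun _ : Fin (n+1) => gaussianReal 0 1) 0
    have key : (fun x : Fin (n+1) → ℝ => ∑ i, a i * x i)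
        = (fun p : ℝ × (Fin n → ℝ) => a 0 * p.1 + ∑ j, a j.succ * p.2 j) ∘ e := by
      funext x
      simp [he, MeasurableEquiv.piFinSuccAbove_apply, Fin.insertNthEquiv,
        Fin.sum_univ_succ, Fin.zero_succAbove, Fin.tail]
    have hsplit : (fun p : ℝ × (Fin n → ℝ) => a 0 * p.1 + ∑ j, a j.succ * p.2 j)
        = (fun q : ℝ × ℝ => q.1 + q.2) ∘
          (Prod.map (fun u => a 0 * u) (fun z : Fin n → ℝ => ∑ j, a j.succ * z j)) := rfl
    have hf : Measurable fun u : ℝ => a 0 * u := by fun_prop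
    have hg : Measurable fun z : Fin n → ℝ => ∑ j, a j.succ * z j := by fun_prop
    rw [key, ← Measure.map_map (by rw [hsplit]; fun_prop) e.measurable, hmp.map_eq,
      hsplit, ← Measure.map_map measurable_add (hf.prodMap hg),
      ← Measure.map_prod_map _ _ hf hg]
    have h1 : Measure.map (fun u : ℝ => a 0 * u) (gaussianReal 0 1)
        = gaussianReal 0 (NNReal.mk ((a 0)^2) (sq_nonneg _)) := by
      have := gaussianReal_map_const_mul (μ := 0) (v := 1) (a 0)
      simpa using this
    rw [h1, ih (fun j => a j.succ), gauss_conv]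
    congr 1
    ext
    push_cast
    rw [Fin.sum_univ_succ]

lemma lintegral_pi_gauss : ∀ (n : ℕ) (g : ℝ → ℝ≥0∞), Measurable g →
    ∫⁻ x : Fin n → ℝ, ∏ i, g (x i) ∂(Measure.pi fun _ : Fin n => gaussianReal 0 1)
      = (∫⁻ t, g t ∂(gaussianReal 0 1)) ^ n := by
  intro n
  induction n with
  | zero => intro g hg; simp
  | succ n ih =>
    intro g hg
    have hmp := measurePreserving_piFinSuccAbove (fun _ : Fin (n+1) => gaussianReal 0 1) 0
    have hG : Measurable fun p : ℝ × (Fin n → ℝ) => g p.1 * ∏ j, g (p.2 j) := by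
      apply Measurable.mul (hg.comp measurable_fst)
      exact Finset.measurable_prod _ fun j _ => hg.comp ((measurable_pi_apply j).comp measurable_snd)
    have key : ∀ x : Fin (n+1) → ℝ, (∏ i, g (x i)) =
        (fun p : ℝ × (Fin n → ℝ) => g p.1 * ∏ j, g (p.2 j))
          (MeasurableEquiv.piFinSuccAbove (fun _ : Fin (n+1) => ℝ) 0 x) := by
      intro x
      simp [MeasurableEquiv.piFinSuccAbove_apply, Fin.insertNthEquiv,
        Fin.prod_univ_succ, Fin.zero_succAbove, Fin.tail]
    simp_rw [key]
    rw [hmp.lintegral_comp hG, lintegral_prod_mul (f := g)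
      (g := fun z : Fin n → ℝ => ∏ j, g (z j)) hg.aemeasurable
      (Finset.measurable_prod _ fun j _ => hg.comp (measurable_pi_apply j)).aemeasurable,
      ih g hg, pow_succ]
    ring

lemma gauss_anticonc {v : ℝ≥0} (hv : v ≠ 0) {c : ℝ} (hc : 0 ≤ c) :
    gaussianReal 0 v {x : ℝ | |x| ≤ c} ≤ ENNReal.ofReal (c / Real.sqrt v) := by
  have hv' : (0:ℝ) < v := lt_of_le_of_ne v.coe_nonneg (by exact_mod_cast (Ne.symm hv))
  have hset : {x : ℝ | |x| ≤ c} = Set.Icc (-c) c := by ext x; simp [abs_le]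
  rw [hset, gaussianReal_apply_eq_integral _ hv]
  apply ENNReal.ofReal_le_ofReal
  have hconst : gaussianPDFReal 0 v ≤ fun _ => (√(2*π*(v:ℝ)))⁻¹ := by
    intro t
    rw [gaussianPDFReal, sub_zero]
    exact mul_le_of_le_one_right (by positivity)
      (Real.exp_le_one_iff.2 (div_nonpos_of_nonpos_of_nonneg (neg_nonpos.2 (sq_nonneg t))
        (by positivity)))
  calc ∫ x in Set.Icc (-c) c, gaussianPDFReal 0 v x
      ≤ ∫ _x in Set.Icc (-c) c, (√(2*π*(v:ℝ)))⁻¹ := by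
        apply setIntegral_mono_on (integrable_gaussianPDFReal 0 v).integrableOn
          (integrableOn_const (by rw [Real.volume_Icc]; exact ENNReal.ofReal_ne_top))
          measurableSet_Icc
        exact fun x _ => hconst x
    _ = (2*c) * (√(2*π*(v:ℝ)))⁻¹ := by
        rw [setIntegral_const, measureReal_def, Real.volume_Icc, smul_eq_mul]
        congr 1
        rw [ENNReal.toReal_ofReal (by linarith)]
        ring
    _ ≤ (2*c) * (2 * Real.sqrt v)⁻¹ := by
        apply mul_le_mul_of_nonneg_left _ (by linarith)
        apply inv_anti₀ (by positivity)
        have h4 : (2:ℝ) * Real.sqrt v = Real.sqrt (4 * v) := by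
          rw [Real.sqrt_mul (by norm_num), show Real.sqrt (4:ℝ) = 2 by
            rw [show (4:ℝ) = 2^2 by norm_num, Real.sqrt_sq]; norm_num]
        rw [h4]
        apply Real.sqrt_le_sqrt
        nlinarith [Real.pi_gt_three]
    _ = c / Real.sqrt v := by field_simp

lemma chisq_tail (n : ℕ) (t : ℝ) :
    (Measure.pi fun _ : Fin n => gaussianReal 0 1) {x : Fin n → ℝ | t < ∑ i, x i ^ 2}
      ≤ ENNReal.ofReal (Real.sqrt 2 ^ n * Real.exp (-t/4)) := by
  set μ := Measure.pi fun _ : Fin n => gaussianReal 0 1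
  have hsingle : ∫⁻ u, ENNReal.ofReal (rexp (u^2/4)) ∂(gaussianReal 0 1)
      = ENNReal.ofReal (Real.sqrt 2) := by
    rw [gaussianReal_of_var_ne_zero _ one_ne_zero,
      lintegral_withDensity_eq_lintegral_mul _ (measurable_gaussianPDF _ _)
        (by fun_prop)]
    have hpt : ∀ u : ℝ, (gaussianPDF 0 1 * fun u => ENNReal.ofReal (rexp (u^2/4))) u
        = ENNReal.ofReal ((√(2*π))⁻¹ * rexp (-(1/4) * u^2)) := by
      intro u
      simp only [Pi.mul_apply, gaussianPDF,
        ← ENNReal.ofReal_mul (gaussianPDFReal_nonneg _ _ _)]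
      congr 1
      rw [gaussianPDFReal, sub_zero, mul_assoc, ← Real.exp_add, NNReal.coe_one, mul_one]
      congr 1
      ring
    simp_rw [hpt]
    rw [← ofReal_integral_eq_lintegral_ofReal
      (((integrable_exp_neg_mul_sq (by norm_num : (0:ℝ) < 1/4)).const_mul _))
      (ae_of_all _ fun u => by positivity)]
    congr 1
    rw [integral_const_mul, integral_gaussian]
    rw [show π / (1/4) = 4 * π by ring, Real.sqrt_mul (by norm_num : (0:ℝ) ≤ 2) π,
      Real.sqrt_mul (by norm_num : (0:ℝ) ≤ 4) π,
      show Real.sqrt 4 = 2 by rw [show (4:ℝ) = 2^2 by norm_num, Real.sqrt_sq]; norm_num]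
    have hπ : Real.sqrt π > 0 := Real.sqrt_pos.2 Real.pi_pos
    have h2 : Real.sqrt 2 > 0 := Real.sqrt_pos.2 (by norm_num)
    field_simp
    nlinarith [Real.sq_sqrt (by norm_num : (0:ℝ) ≤ 2)]
  set f : (Fin n → ℝ) → ℝ≥0∞ := fun x => ENNReal.ofReal (rexp ((∑ i, x i ^ 2)/4)) with hf
  have hprod : ∫⁻ x, f x ∂μ = (ENNReal.ofReal (Real.sqrt 2)) ^ n := by
    simp only [hf]
    have : ∀ x : Fin n → ℝ, ENNReal.ofReal (rexp ((∑ i, x i ^ 2)/4))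
        = ∏ i, ENNReal.ofReal (rexp ((x i)^2/4)) := by
      intro x
      rw [Finset.sum_div, Real.exp_sum, ← ENNReal.ofReal_prod_of_nonneg]
      exact fun i _ => (Real.exp_pos _).le
    simp_rw [this]
    exact (lintegral_pi_gauss n (fun u => ENNReal.ofReal (rexp (u^2/4)))
      (by fun_prop)).trans (by rw [hsingle])
  have hfm : Measurable f := by fun_prop
  have hsub : {x : Fin n → ℝ | t < ∑ i, x i ^ 2} ⊆
      {x | ENNReal.ofReal (rexp (t/4)) ≤ f x} := by
    intro x hx
    simp only [Set.mem_setOf_eq] at hx ⊢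
    exact ENNReal.ofReal_le_ofReal (Real.exp_le_exp.2 (by linarith))
  have hmarkov := mul_meas_ge_le_lintegral₀ (μ := μ) hfm.aemeasurable (ENNReal.ofReal (rexp (t/4)))
  rw [hprod] at hmarkov
  have hε0 : (ENNReal.ofReal (rexp (t/4))) ≠ 0 := by
    simp [ENNReal.ofReal_eq_zero, not_le, Real.exp_pos]
  calc μ {x : Fin n → ℝ | t < ∑ i, x i ^ 2}
      ≤ μ {x | ENNReal.ofReal (rexp (t/4)) ≤ f x} := measure_mono hsub
    _ ≤ (ENNReal.ofReal (Real.sqrt 2))^n / ENNReal.ofReal (rexp (t/4)) :=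
        (ENNReal.le_div_iff_mul_le (Or.inl hε0) (Or.inl ENNReal.ofReal_ne_top)).2
          (by rw [mul_comm]; exact hmarkov)
    _ = ENNReal.ofReal (Real.sqrt 2 ^ n * Real.exp (-t/4)) := by
        rw [← ENNReal.ofReal_pow (Real.sqrt_nonneg 2),
          ← ENNReal.ofReal_div_of_pos (Real.exp_pos _)]
        congr 1
        rw [div_eq_mul_inv, ← Real.exp_neg, neg_div]

theorem stmt5 {n : ℕ} (a : Fin n → ℝ) (ha : a ≠ 0) (δ : ℝ) (hδ : 0 ≤ δ) :
    (Measure.pi fun _ : Fin n => gaussianReal 0 1)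
      {x : Fin n → ℝ |
        |∑ i, a i * (x i / Real.sqrt (∑ j, x j ^ 2))| ≤
          δ * Real.sqrt (∑ i, a i ^ 2) / (6 * Real.sqrt ((n : ℝ) + Real.log (1 / δ)))} ≤
      ENNReal.ofReal δ := by
  have hn : 0 < n := by
    rcases Nat.eq_zero_or_pos n with h | h
    · exact absurd (by subst h; exact funext fun i => i.elim0) ha
    · exact h
  set V : ℝ≥0 := ⟨∑ i, a i ^ 2, Finset.sum_nonneg fun i _ => sq_nonneg _⟩ with hVdef
  have hV : V ≠ 0 := by
    intro h
    apply ha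
    have h0 : ∑ i, a i ^ 2 = 0 := congrArg NNReal.toReal h
    funext i
    have := (Finset.sum_eq_zero_iff_of_nonneg (fun i _ => sq_nonneg (a i))).1 h0 i
      (Finset.mem_univ i)
    exact (pow_eq_zero_iff two_ne_zero).1 this
  have hsum : 0 < ∑ i, a i ^ 2 :=
    lt_of_le_of_ne (Finset.sum_nonneg fun i _ => sq_nonneg _)
      (fun h => hV (NNReal.coe_injective (by simp [hVdef, h.symm]; rfl)))
  have hA : 0 < Real.sqrt (∑ i, a i ^ 2) := Real.sqrt_pos.2 hsum
  by_cases hδ1 : 1 ≤ δ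
  · calc (Measure.pi fun _ : Fin n => gaussianReal 0 1) _ ≤ 1 := prob_le_one
      _ ≤ ENNReal.ofReal δ := by
          rw [← ENNReal.ofReal_one]; exact ENNReal.ofReal_le_ofReal hδ1
  push_neg at hδ1
  by_cases hδ0 : δ = 0
  · subst hδ0
    have hnull : (Measure.pi fun _ : Fin n => gaussianReal 0 1)
        ((fun x : Fin n → ℝ => ∑ i, a i * x i) ⁻¹' {0}) = 0 := by
      rw [← Measure.map_apply (by fun_prop) (measurableSet_singleton 0), map_linear n a]
      exact (gaussianReal_absolutelyContinuous 0 hV) Real.volume_singleton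
    rw [ENNReal.ofReal_zero, ← hnull]
    apply measure_mono
    intro x hx
    simp only [Set.mem_setOf_eq, zero_mul, zero_div, abs_nonpos_iff] at hx
    simp only [Set.mem_preimage, Set.mem_singleton_iff]
    rcases eq_or_lt_of_le (Finset.sum_nonneg fun j (_ : j ∈ Finset.univ) => sq_nonneg (x j))
      with h0 | h0
    · have hz : ∀ j, x j = 0 := fun j =>
        (pow_eq_zero_iff two_ne_zero).1
          ((Finset.sum_eq_zero_iff_of_nonneg (fun i _ => sq_nonneg (x i))).1 h0.symm j
            (Finset.mem_univ j))
      simp [hz]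
    · have hr : 0 < Real.sqrt (∑ j, x j ^ 2) := Real.sqrt_pos.2 h0
      have hrw : ∑ i, a i * (x i / Real.sqrt (∑ j, x j ^ 2))
          = (∑ i, a i * x i) / Real.sqrt (∑ j, x j ^ 2) := by
        rw [Finset.sum_div]; exact Finset.sum_congr rfl fun i _ => (mul_div_assoc _ _ _).symm
      rw [hrw, div_eq_zero_iff] at hx
      rcases hx with h | h
      · exact h
      · exact absurd h hr.ne'
  have hδpos : 0 < δ := lt_of_le_of_ne hδ (Ne.symm hδ0)
  set L := Real.log (1/δ) with hLdef
  have hL : 0 ≤ L := Real.log_nonneg (by rw [le_div_iff₀ hδpos]; linarith)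
  set M := Real.sqrt ((n:ℝ) + L) with hMdef
  have hM1 : 1 ≤ M := by
    rw [hMdef, show (1:ℝ) = Real.sqrt 1 from (Real.sqrt_one).symm]
    apply Real.sqrt_le_sqrt
    have h1n : (1:ℝ) ≤ (n:ℝ) := by exact_mod_cast hn
    linarith
  have hM0 : 0 < M := lt_of_lt_of_le one_pos hM1
  set s := δ * Real.sqrt (∑ i, a i ^ 2) / (6 * M) with hsdef
  have hs0 : 0 ≤ s := by positivity
  set T := 3 * M with hTdef
  have hT0 : 0 < T := by positivity
  have hsub : {x : Fin n → ℝ | |∑ i, a i * (x i / Real.sqrt (∑ j, x j ^ 2))| ≤ s}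
      ⊆ ((fun x : Fin n → ℝ => ∑ i, a i * x i) ⁻¹' {u : ℝ | |u| ≤ s * T})
        ∪ {x : Fin n → ℝ | T^2 < ∑ j, x j ^ 2} := by
    intro x hx
    simp only [Set.mem_setOf_eq] at hx
    by_cases hTx : ∑ j, x j ^ 2 ≤ T^2
    · left
      simp only [Set.mem_preimage, Set.mem_setOf_eq]
      rcases eq_or_lt_of_le (Finset.sum_nonneg fun j (_ : j ∈ Finset.univ) => sq_nonneg (x j))
        with h0 | h0
      · have hz : ∀ j, x j = 0 := fun j =>
          (pow_eq_zero_iff two_ne_zero).1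
            ((Finset.sum_eq_zero_iff_of_nonneg (fun i _ => sq_nonneg (x i))).1 h0.symm j
              (Finset.mem_univ j))
        simp only [hz, mul_zero, Finset.sum_const_zero, abs_zero]
        positivity
      · have hr : 0 < Real.sqrt (∑ j, x j ^ 2) := Real.sqrt_pos.2 h0
        have hrw : ∑ i, a i * (x i / Real.sqrt (∑ j, x j ^ 2))
            = (∑ i, a i * x i) / Real.sqrt (∑ j, x j ^ 2) := by
          rw [Finset.sum_div]; exact Finset.sum_congr rfl fun i _ => (mul_div_assoc _ _ _).symm
        rw [hrw, abs_div, abs_of_pos hr, div_le_iff₀ hr] at hx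
        refine hx.trans ?_
        apply mul_le_mul_of_nonneg_left _ hs0
        calc Real.sqrt (∑ j, x j ^ 2) ≤ Real.sqrt (T^2) := Real.sqrt_le_sqrt hTx
          _ = T := Real.sqrt_sq hT0.le
    · right
      exact lt_of_not_ge hTx
  refine le_trans (le_trans (measure_mono hsub) (measure_union_le _ _)) ?_
  have h1 : (Measure.pi fun _ : Fin n => gaussianReal 0 1)
      ((fun x : Fin n → ℝ => ∑ i, a i * x i) ⁻¹' {u : ℝ | |u| ≤ s * T})
      ≤ ENNReal.ofReal (δ/2) := by
    rw [← Measure.map_apply (by fun_prop)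
      (measurableSet_le continuous_abs.measurable measurable_const), map_linear n a]
    refine (gauss_anticonc hV (by positivity)).trans ?_
    apply ENNReal.ofReal_le_ofReal
    have hc : Real.sqrt ((V:ℝ)) = Real.sqrt (∑ i, a i ^ 2) := rfl
    apply le_of_eq
    rw [hc, hsdef, hTdef]
    field_simp
    ring
  have h2 := chisq_tail n (T^2)
  refine le_trans (add_le_add h1 h2) ?_
  rw [← ENNReal.ofReal_add (by positivity) (by positivity)]
  apply ENNReal.ofReal_le_ofReal
  have hM2 : M^2 = (n:ℝ) + L := Real.sq_sqrt (by positivity)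
  have hT2 : T^2 = 9 * ((n:ℝ) + L) := by rw [hTdef, mul_pow, hM2]; norm_num
  have hLδ : L = -Real.log δ := by rw [hLdef, one_div, Real.log_inv]
  have hexp : Real.exp (-(T^2)/4) = Real.exp (-(9:ℝ)/4)^n * δ ^ ((9:ℝ)/4) := by
    rw [hT2, hLδ, show -(9 * ((n:ℝ) + -Real.log δ))/4
      = (n:ℝ) * (-(9:ℝ)/4) + Real.log δ * ((9:ℝ)/4) by ring, Real.exp_add,
      Real.exp_nat_mul, ← Real.rpow_def_of_pos hδpos]
  have hbase : Real.sqrt 2 * Real.exp (-(9:ℝ)/4) ≤ 1/2 := by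
    have hb1 : Real.exp (-(9:ℝ)/4) ≤ 4/13 := by
      rw [show (-(9:ℝ)/4) = -((9:ℝ)/4) by norm_num, Real.exp_neg,
        show (4:ℝ)/13 = ((13:ℝ)/4)⁻¹ by norm_num]
      apply inv_anti₀ (by norm_num)
      have := Real.add_one_le_exp ((9:ℝ)/4)
      linarith
    have hb2 : Real.sqrt 2 ≤ 13/8 := by
      rw [show (13:ℝ)/8 = Real.sqrt ((13/8)^2) from (Real.sqrt_sq (by norm_num)).symm]
      exact Real.sqrt_le_sqrt (by norm_num)
    nlinarith [Real.sqrt_nonneg 2, (Real.exp_pos (-(9:ℝ)/4)).le]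
  have hδ94 : δ ^ ((9:ℝ)/4) ≤ δ := by
    nth_rewrite 2 [← Real.rpow_one δ]
    exact Real.rpow_le_rpow_of_exponent_ge hδpos hδ1.le (by norm_num)
  have hpow : (Real.sqrt 2 * Real.exp (-(9:ℝ)/4))^n ≤ 1/2 := by
    calc (Real.sqrt 2 * Real.exp (-(9:ℝ)/4))^n ≤ (1/2:ℝ)^n :=
          pow_le_pow_left₀ (by positivity) hbase n
      _ ≤ (1/2:ℝ)^1 := pow_le_pow_of_le_one (by norm_num) (by norm_num) hn
      _ = 1/2 := pow_one _
  have hfin : Real.sqrt 2 ^ n * Real.exp (-(T^2)/4) ≤ (1/2) * δ := by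
    rw [hexp, ← mul_assoc, ← mul_pow]
    exact mul_le_mul hpow hδ94 (Real.rpow_nonneg hδpos.le _) (by norm_num)
  linarith
end

section
/- Let U = (U_1,...,U_s) be an independent s-tuple of subspaces of W with direct sum U, let M be a U-associated matrix, and for λ ∈ R^s let the scaling map Σ_i λ_i P_i be the map that acts as λ_i times the identity on U_i (and zero on U^⊥), where P_i = M·Λ(e_i)·M†. Let M̂: R^s → Lin(U,U) be the map λ ↦ Σ_i λ_i P_i. Then ‖M̂‖ ≤ κ(M)·√(max_i dim U_i) and κ(M̂) ≤ κ(M)·√(max_i dim U_i / min_j dim U_j). -/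
/-- Largest singular value of the matrix whose columns are the vectors `v k`. -/
noncomputable def famSup {n : ℕ} {ι : Type} [Fintype ι] (v : ι → EuclideanSpace ℝ (Fin n)) : ℝ :=
  sSup {r | ∃ c : EuclideanSpace ℝ ι, ‖c‖ = 1 ∧ r = ‖∑ k, c k • v k‖}

/-- Smallest singular value of the matrix whose columns are the vectors `v k`. -/
noncomputable def famInf {n : ℕ} {ι : Type} [Fintype ι] (v : ι → EuclideanSpace ℝ (Fin n)) : ℝ :=
  sInf {r | ∃ c : EuclideanSpace ℝ ι, ‖c‖ = 1 ∧ r = ‖∑ k, c k • v k‖}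

/-- Frobenius (Hilbert–Schmidt) norm of a linear endomorphism of Euclidean space. -/
noncomputable def frob {n : ℕ}
    (T : EuclideanSpace ℝ (Fin n) →ₗ[ℝ] EuclideanSpace ℝ (Fin n)) : ℝ :=
  Real.sqrt (∑ k, ‖T (EuclideanSpace.single k 1)‖ ^ 2)

lemma enorm_sq {ι : Type*} [Fintype ι] (c : EuclideanSpace ℝ ι) : ‖c‖^2 = ∑ i, (c i)^2 := by
  rw [EuclideanSpace.norm_eq, Real.sq_sqrt (by positivity)]
  simp [Real.norm_eq_abs, sq_abs]

lemma coord_le_norm {ι : Type*} [Fintype ι] (c : EuclideanSpace ℝ ι) (k : ι) : |c k| ≤ ‖c‖ := by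
  rw [EuclideanSpace.norm_eq, ← Real.sqrt_sq_eq_abs]
  apply Real.sqrt_le_sqrt
  have := Finset.single_le_sum (f := fun i => ‖c i‖^2) (fun i _ => by positivity) (Finset.mem_univ k)
  simpa [Real.norm_eq_abs, sq_abs] using this

lemma aux_li {n s : ℕ} (d : Fin s → ℕ)
    (U : Fin s → Submodule ℝ (EuclideanSpace ℝ (Fin n)))
    (hIndep : iSupIndep U)
    (v : (Σ i : Fin s, Fin (d i)) → EuclideanSpace ℝ (Fin n))
    (hON : ∀ i : Fin s, Orthonormal ℝ (fun j : Fin (d i) => v ⟨i, j⟩))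
    (hspan : ∀ i : Fin s,
      Submodule.span ℝ (Set.range fun j : Fin (d i) => v ⟨i, j⟩) = U i) :
    LinearIndependent ℝ v := by
  have h := linearIndependent_iUnion_finite (R := ℝ)
    (f := fun (i : Fin s) (j : Fin (d i)) => v ⟨i, j⟩)
    (fun i => (hON i).linearIndependent) ?_
  · exact h
  · intro i t _ hit
    rw [hspan i]
    have h2 : (⨆ l ∈ t, Submodule.span ℝ (Set.range fun j : Fin (d l) => v ⟨l, j⟩)) ≤
        ⨆ l, ⨆ _ : l ≠ i, U l := by
      refine iSup₂_le fun l hl => ?_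
      rw [hspan l]
      exact le_iSup₂ (f := fun l (_ : l ≠ i) => U l) l (by rintro rfl; exact hit hl)
    exact (hIndep i).mono_right h2

lemma aux_famInf_pos {n : ℕ} {ι : Type} [Fintype ι] [hne : Nonempty ι]
    (v : ι → EuclideanSpace ℝ (Fin n)) (hli : LinearIndependent ℝ v) :
    0 < famInf v := by
  classical
  have hcont : Continuous (fun c : EuclideanSpace ℝ ι => ‖∑ k, c k • v k‖) := by
    apply Continuous.norm
    apply continuous_finset_sum
    intro k _
    exact ((continuous_apply k).comp (PiLp.continuous_ofLp (p := 2) (β := fun _ : ι => ℝ))).smul continuous_const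
  obtain ⟨c0, hc0mem, hc0min⟩ := (isCompact_sphere (0 : EuclideanSpace ℝ ι) 1).exists_isMinOn
    ⟨EuclideanSpace.single (Classical.arbitrary ι) 1,
      by simp [mem_sphere_zero_iff_norm, EuclideanSpace.norm_single]⟩
    hcont.continuousOn
  have hc0norm : ‖c0‖ = 1 := mem_sphere_zero_iff_norm.mp hc0mem
  have hmin_pos : 0 < ‖∑ k, c0 k • v k‖ := by
    rw [norm_pos_iff]
    intro h0
    have hz := Fintype.linearIndependent_iff.mp hli (fun k => c0 k) h0
    have : c0 = 0 := by
      ext k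
      exact hz k
    rw [this, norm_zero] at hc0norm
    norm_num at hc0norm
  refine lt_of_lt_of_le hmin_pos ?_
  rw [show famInf v = sInf {r | ∃ c : EuclideanSpace ℝ ι, ‖c‖ = 1 ∧ r = ‖∑ k, c k • v k‖} from rfl]
  refine le_csInf ⟨_, ⟨c0, hc0norm, rfl⟩⟩ ?_
  rintro r ⟨c, hc, rfl⟩
  exact hc0min (mem_sphere_zero_iff_norm.mpr hc)

lemma scale_norm {n : ℕ} {ι : Type} [Fintype ι] (v : ι → EuclideanSpace ℝ (Fin n))
    (a : EuclideanSpace ℝ ι) (t : ℝ) :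
    ∑ k, (t • a) k • v k = t • ∑ k, a k • v k := by
  rw [Finset.smul_sum]
  exact Finset.sum_congr rfl fun k _ => by rw [PiLp.smul_apply, smul_smul, smul_eq_mul]

lemma hSup_le' {n : ℕ} {ι : Type} [Fintype ι] (v : ι → EuclideanSpace ℝ (Fin n))
    (hnn : 0 ≤ famSup v) (a : EuclideanSpace ℝ ι) :
    ‖∑ k, a k • v k‖ ≤ famSup v * ‖a‖ := by
  have bddA : BddAbove {r | ∃ c : EuclideanSpace ℝ ι, ‖c‖ = 1 ∧ r = ‖∑ k, c k • v k‖} := by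
    refine ⟨∑ k, ‖v k‖, ?_⟩
    rintro r ⟨c, hc, rfl⟩
    calc ‖∑ k, c k • v k‖ ≤ ∑ k, ‖c k • v k‖ := norm_sum_le _ _
      _ ≤ ∑ k, ‖v k‖ := by
          refine Finset.sum_le_sum fun k _ => ?_
          rw [norm_smul]
          have h1 : ‖c k‖ ≤ 1 := by rw [← hc, Real.norm_eq_abs]; exact coord_le_norm c k
          exact mul_le_of_le_one_left (norm_nonneg _) h1
  rcases eq_or_ne a 0 with rfl | ha
  · simp [hnn]
  · have hna : (0:ℝ) < ‖a‖ := norm_pos_iff.mpr ha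
    have hmem : ‖∑ k, (‖a‖⁻¹ • a) k • v k‖ ∈
        {r | ∃ c : EuclideanSpace ℝ ι, ‖c‖ = 1 ∧ r = ‖∑ k, c k • v k‖} :=
      ⟨‖a‖⁻¹ • a, by rw [norm_smul, norm_inv, norm_norm, inv_mul_cancel₀ hna.ne'], rfl⟩
    have key := le_csSup bddA hmem
    rw [scale_norm, norm_smul, norm_inv, norm_norm] at key
    rw [show famSup v = sSup {r | ∃ c : EuclideanSpace ℝ ι, ‖c‖ = 1 ∧ r = ‖∑ k, c k • v k‖} from rfl]
    calc ‖∑ k, a k • v k‖ = (‖a‖⁻¹ * ‖∑ k, a k • v k‖) * ‖a‖ := by field_simp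
      _ ≤ _ * ‖a‖ := by gcongr

lemma hInf_le' {n : ℕ} {ι : Type} [Fintype ι] (v : ι → EuclideanSpace ℝ (Fin n))
    (a : EuclideanSpace ℝ ι) :
    famInf v * ‖a‖ ≤ ‖∑ k, a k • v k‖ := by
  have bddB : BddBelow {r | ∃ c : EuclideanSpace ℝ ι, ‖c‖ = 1 ∧ r = ‖∑ k, c k • v k‖} :=
    ⟨0, by rintro r ⟨c, -, rfl⟩; exact norm_nonneg _⟩
  rcases eq_or_ne a 0 with rfl | ha
  · simp
  · have hna : (0:ℝ) < ‖a‖ := norm_pos_iff.mpr ha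
    have hmem : ‖∑ k, (‖a‖⁻¹ • a) k • v k‖ ∈
        {r | ∃ c : EuclideanSpace ℝ ι, ‖c‖ = 1 ∧ r = ‖∑ k, c k • v k‖} :=
      ⟨‖a‖⁻¹ • a, by rw [norm_smul, norm_inv, norm_norm, inv_mul_cancel₀ hna.ne'], rfl⟩
    have key := csInf_le bddB hmem
    rw [scale_norm, norm_smul, norm_inv, norm_norm] at key
    rw [show famInf v = sInf {r | ∃ c : EuclideanSpace ℝ ι, ‖c‖ = 1 ∧ r = ‖∑ k, c k • v k‖} from rfl]
    calc sInf _ * ‖a‖ ≤ (‖a‖⁻¹ * ‖∑ k, a k • v k‖) * ‖a‖ := by gcongr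
      _ = ‖∑ k, a k • v k‖ := by field_simp

lemma aux_cmap {n s : ℕ} (d : Fin s → ℕ)
    (U : Fin s → Submodule ℝ (EuclideanSpace ℝ (Fin n)))
    (v : (Σ i : Fin s, Fin (d i)) → EuclideanSpace ℝ (Fin n))
    (hspan : ∀ i : Fin s,
      Submodule.span ℝ (Set.range fun j : Fin (d i) => v ⟨i, j⟩) = U i)
    (hli : LinearIndependent ℝ v)
    (hvU : ∀ k : (Σ i : Fin s, Fin (d i)), v k ∈ U k.1)
    (V : Submodule ℝ (EuclideanSpace ℝ (Fin n))) (hV : V = ⨆ i, U i)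
    (hvV : ∀ k, v k ∈ V) :
    ∃ cmap : EuclideanSpace ℝ (Fin n) →ₗ[ℝ] EuclideanSpace ℝ (Σ i : Fin s, Fin (d i)),
      ∀ x : EuclideanSpace ℝ (Fin n), ∑ k, cmap x k • v k =
        (Submodule.orthogonalProjection V x : EuclideanSpace ℝ (Fin n)) := by
  classical
  have hspanV : Submodule.span ℝ (Set.range v) = V := by
    rw [hV]
    apply le_antisymm
    · rw [Submodule.span_le]
      rintro x ⟨⟨i, j⟩, rfl⟩
      exact Submodule.mem_iSup_of_mem i (hvU ⟨i, j⟩)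
    · refine iSup_le fun i => ?_
      rw [← hspan i]
      apply Submodule.span_mono
      rintro x ⟨j, rfl⟩
      exact ⟨⟨i, j⟩, rfl⟩
  set vV : (Σ i : Fin s, Fin (d i)) → V := fun k => ⟨v k, hvV k⟩ with hvVdef
  have hliV : LinearIndependent ℝ vV := by
    apply LinearIndependent.of_comp V.subtype
    exact hli
  have hspanVtop : ⊤ ≤ Submodule.span ℝ (Set.range vV) := by
    intro x _
    have hx : (x : EuclideanSpace ℝ (Fin n)) ∈ Submodule.span ℝ (Set.range v) := by
      rw [hspanV]; exact x.2
    obtain ⟨c, hc⟩ := (Submodule.mem_span_range_iff_exists_fun ℝ).mp hx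
    have hxe : x = ∑ k, c k • vV k := by
      apply Subtype.ext
      rw [← hc]
      push_cast
      rfl
    rw [hxe]
    exact Submodule.sum_mem _ fun k _ => Submodule.smul_mem _ _ (Submodule.subset_span ⟨k, rfl⟩)
  set B : Module.Basis (Σ i : Fin s, Fin (d i)) ℝ V := Module.Basis.mk hliV hspanVtop with hB
  refine ⟨{ toFun := fun x => WithLp.toLp 2 (fun k => B.repr (Submodule.orthogonalProjection V x) k),
            map_add' := by intro x y; ext k; simp,
            map_smul' := by intro c x; ext k; simp }, ?_⟩
  intro x
  conv_rhs => rw [← B.sum_repr (Submodule.orthogonalProjection V x)]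
  push_cast
  refine Finset.sum_congr rfl fun k _ => ?_
  rw [hB, Module.Basis.mk_apply]
  rfl

lemma aux_cbounds {n : ℕ} {ι : Type} [Fintype ι] (v : ι → EuclideanSpace ℝ (Fin n))
    (V : Submodule ℝ (EuclideanSpace ℝ (Fin n)))
    (cmap : EuclideanSpace ℝ (Fin n) →ₗ[ℝ] EuclideanSpace ℝ ι)
    (hsum : ∀ x : EuclideanSpace ℝ (Fin n), ∑ k, cmap x k • v k =
      (Submodule.orthogonalProjection V x : EuclideanSpace ℝ (Fin n)))
    (hInf_le : ∀ a : EuclideanSpace ℝ ι, famInf v * ‖a‖ ≤ ‖∑ k, a k • v k‖)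
    (famInf_pos : 0 < famInf v) :
    (∀ x, famInf v * ‖cmap x‖ ≤ ‖x‖) ∧
    (∀ k0, ∑ j, (cmap (EuclideanSpace.single j 1) k0)^2 ≤ (1 / famInf v)^2) := by
  classical
  have hc_le : ∀ x, famInf v * ‖cmap x‖ ≤ ‖x‖ := by
    intro x
    calc famInf v * ‖cmap x‖ ≤ ‖∑ k, cmap x k • v k‖ := hInf_le _
      _ = ‖(Submodule.orthogonalProjection V x : EuclideanSpace ℝ (Fin n))‖ := by rw [hsum]
      _ ≤ ‖x‖ := by
          calc ‖(Submodule.orthogonalProjection V x : EuclideanSpace ℝ (Fin n))‖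
              = ‖Submodule.orthogonalProjection V x‖ := rfl
            _ ≤ ‖Submodule.orthogonalProjection V‖ * ‖x‖ := (Submodule.orthogonalProjection V).le_opNorm x
            _ ≤ 1 * ‖x‖ := by
                have := Submodule.orthogonalProjectionOnto_norm_le V
                gcongr
            _ = ‖x‖ := one_mul _
  refine ⟨hc_le, ?_⟩
  intro k0
  set u : EuclideanSpace ℝ (Fin n) := WithLp.toLp 2 (fun j => cmap (EuclideanSpace.single j 1) k0) with hu
  have hurep : u = ∑ j, u j • EuclideanSpace.single j 1 := by
    ext j
    rw [show ((∑ j, u j • EuclideanSpace.single j 1 : EuclideanSpace ℝ (Fin n)) j)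
        = ∑ i, (u i • (EuclideanSpace.single i 1 : EuclideanSpace ℝ (Fin n))) j from
        by rw [WithLp.ofLp_sum, Finset.sum_apply]]
    simp [EuclideanSpace.single_apply]
  have husum : ∑ j, (cmap (EuclideanSpace.single j 1) k0)^2 = cmap u k0 := by
    calc ∑ j, (cmap (EuclideanSpace.single j 1) k0)^2
        = ∑ j, u j * cmap (EuclideanSpace.single j 1) k0 := by
          refine Finset.sum_congr rfl fun j _ => ?_
          rw [hu]; ring
      _ = cmap u k0 := by
          conv_rhs => rw [hurep, map_sum]
          rw [show ((∑ j, cmap (u j • EuclideanSpace.single j 1) : EuclideanSpace ℝ ι) k0)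
              = ∑ j, (cmap (u j • EuclideanSpace.single j 1)) k0 from
              by rw [WithLp.ofLp_sum, Finset.sum_apply]]
          refine Finset.sum_congr rfl fun j _ => ?_
          rw [map_smul]
          rfl
  have h3 : ‖u‖^2 = cmap u k0 := by
    rw [enorm_sq, ← husum]
  have h4 : famInf v * ‖u‖^2 ≤ ‖u‖ := by
    calc famInf v * ‖u‖^2 = famInf v * cmap u k0 := by rw [h3]
      _ ≤ famInf v * |cmap u k0| := by
          gcongr
          exact le_abs_self _
      _ ≤ famInf v * ‖cmap u‖ := by
          gcongr
          exact coord_le_norm _ _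
      _ ≤ ‖u‖ := hc_le u
  have h5 : ‖u‖ ≤ 1 / famInf v := by
    rcases eq_or_lt_of_le (norm_nonneg u) with h | h
    · rw [← h]; positivity
    · rw [le_div_iff₀ famInf_pos]
      nlinarith
  calc ∑ j, (cmap (EuclideanSpace.single j 1) k0)^2 = ‖u‖^2 := by rw [husum, h3]
    _ ≤ (1/famInf v)^2 := by
        have h0 : (0:ℝ) ≤ ‖u‖ := norm_nonneg u
        nlinarith

lemma aux_hT {n s : ℕ} (d : Fin s → ℕ)
    (U : Fin s → Submodule ℝ (EuclideanSpace ℝ (Fin n)))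
    (v : (Σ i : Fin s, Fin (d i)) → EuclideanSpace ℝ (Fin n))
    (hvU : ∀ k : (Σ i : Fin s, Fin (d i)), v k ∈ U k.1)
    (V : Submodule ℝ (EuclideanSpace ℝ (Fin n)))
    (lam : EuclideanSpace ℝ (Fin s))
    (T : EuclideanSpace ℝ (Fin n) →ₗ[ℝ] EuclideanSpace ℝ (Fin n))
    (hTU : ∀ (i : Fin s), ∀ x ∈ U i, T x = lam i • x)
    (hTperp : ∀ x ∈ Vᗮ, T x = 0)
    (cmap : EuclideanSpace ℝ (Fin n) →ₗ[ℝ] EuclideanSpace ℝ (Σ i : Fin s, Fin (d i)))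
    (hsum : ∀ x : EuclideanSpace ℝ (Fin n), ∑ k, cmap x k • v k =
      (Submodule.orthogonalProjection V x : EuclideanSpace ℝ (Fin n))) :
    ∀ x, T x = ∑ k, (lam k.1 * cmap x k) • v k := by
  intro x
  have h1 : T x = T (Submodule.orthogonalProjection V x : EuclideanSpace ℝ (Fin n)) := by
    conv_lhs => rw [show x = (Submodule.orthogonalProjection V x : EuclideanSpace ℝ (Fin n)) +
      (x - (Submodule.orthogonalProjection V x : EuclideanSpace ℝ (Fin n))) by abel]
    rw [map_add, hTperp (x - (Submodule.orthogonalProjection V x : EuclideanSpace ℝ (Fin n))) (Submodule.sub_starProjection_mem_orthogonal (K := V) x), add_zero]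
  rw [h1, ← hsum x, map_sum]
  refine Finset.sum_congr rfl fun k _ => ?_
  rw [map_smul, hTU k.1 (v k) (hvU k), smul_smul, mul_comm]

lemma aux_upper {n s : ℕ} (d : Fin s → ℕ) (D : ℕ) (hDd : ∀ i, (d i : ℝ) ≤ D)
    (v : (Σ i : Fin s, Fin (d i)) → EuclideanSpace ℝ (Fin n))
    (T : EuclideanSpace ℝ (Fin n) →ₗ[ℝ] EuclideanSpace ℝ (Fin n))
    (lam : EuclideanSpace ℝ (Fin s)) (hlam : ∑ i, (lam i)^2 = 1)
    (cmap : EuclideanSpace ℝ (Fin n) →ₗ[ℝ] EuclideanSpace ℝ (Σ i : Fin s, Fin (d i)))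
    (hT : ∀ x, T x = ∑ k, (lam k.1 * cmap x k) • v k)
    (fS fI : ℝ) (hfS : 0 ≤ fS) (hfI : 0 < fI)
    (hSup_le : ∀ a : EuclideanSpace ℝ (Σ i : Fin s, Fin (d i)),
      ‖∑ k, a k • v k‖ ≤ fS * ‖a‖)
    (hcol : ∀ k0, ∑ j, (cmap (EuclideanSpace.single j 1) k0)^2 ≤ (1 / fI)^2) :
    frob T ≤ (fS / fI) * Real.sqrt D := by
  classical
  set a : Fin n → EuclideanSpace ℝ (Σ i : Fin s, Fin (d i)) :=
    fun j => WithLp.toLp 2 (fun k => lam k.1 * cmap (EuclideanSpace.single j 1) k) with ha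
  have hκnn : 0 ≤ fS / fI := div_nonneg hfS hfI.le
  have key : ∑ j, ‖T (EuclideanSpace.single j 1)‖^2 ≤ (fS/fI)^2 * D := by
    calc ∑ j, ‖T (EuclideanSpace.single j 1)‖^2
        ≤ ∑ j, (fS * ‖a j‖)^2 := by
          refine Finset.sum_le_sum fun j _ => ?_
          have h1 := hSup_le (a j)
          rw [hT]
          exact pow_le_pow_left₀ (norm_nonneg _) h1 2
      _ = ∑ j, fS^2 * ∑ k, (lam k.1)^2 * (cmap (EuclideanSpace.single j 1) k)^2 := by
          refine Finset.sum_congr rfl fun j _ => ?_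
          rw [mul_pow, enorm_sq]
          congr 1
          refine Finset.sum_congr rfl fun k _ => ?_
          rw [ha]
          ring
      _ = fS^2 * ∑ k : (Σ i : Fin s, Fin (d i)), (lam k.1)^2 *
            ∑ j, (cmap (EuclideanSpace.single j 1) k)^2 := by
          rw [← Finset.mul_sum, Finset.sum_comm]
          congr 1
          refine Finset.sum_congr rfl fun k _ => ?_
          rw [Finset.mul_sum]
      _ ≤ fS^2 * ∑ k : (Σ i : Fin s, Fin (d i)), (lam k.1)^2 * (1/fI)^2 := by
          refine mul_le_mul_of_nonneg_left ?_ (sq_nonneg fS)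
          refine Finset.sum_le_sum fun k _ => ?_
          exact mul_le_mul_of_nonneg_left (hcol k) (sq_nonneg _)
      _ = (fS/fI)^2 * ∑ k : (Σ i : Fin s, Fin (d i)), (lam k.1)^2 := by
          rw [Finset.mul_sum, Finset.mul_sum]
          refine Finset.sum_congr rfl fun k _ => ?_
          field_simp
      _ = (fS/fI)^2 * ∑ i, (d i : ℝ) * (lam i)^2 := by
          congr 1
          rw [← Finset.univ_sigma_univ, Finset.sum_sigma]
          refine Finset.sum_congr rfl fun i _ => ?_
          simp [mul_comm]
      _ ≤ (fS/fI)^2 * ∑ i, (D : ℝ) * (lam i)^2 := by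
          refine mul_le_mul_of_nonneg_left ?_ (sq_nonneg _)
          refine Finset.sum_le_sum fun i _ => ?_
          exact mul_le_mul_of_nonneg_right (hDd i) (sq_nonneg _)
      _ = (fS/fI)^2 * D := by
          rw [← Finset.mul_sum, hlam, mul_one]
  have h2 := Real.sqrt_le_sqrt key
  rw [frob]
  refine le_trans h2 ?_
  rw [Real.sqrt_mul (sq_nonneg _), Real.sqrt_sq hκnn]

lemma aux_lower {n s : ℕ} (d : Fin s → ℕ) (Dm : ℕ) (hDd : ∀ i, (Dm : ℝ) ≤ d i)
    (U : Fin s → Submodule ℝ (EuclideanSpace ℝ (Fin n)))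
    (hIndep : iSupIndep U)
    (hd : ∀ i, Module.finrank ℝ (U i) = d i)
    (lam : EuclideanSpace ℝ (Fin s)) (hlam : ∑ i, (lam i)^2 = 1)
    (T : EuclideanSpace ℝ (Fin n) →ₗ[ℝ] EuclideanSpace ℝ (Fin n))
    (hTU : ∀ (i : Fin s), ∀ x ∈ U i, T x = lam i • x) :
    Real.sqrt Dm ≤ frob T := by
  classical
  set Vlt : Fin s → Submodule ℝ (EuclideanSpace ℝ (Fin n)) :=
    fun i => ⨆ j, ⨆ _ : j < i, U j with hVlt
  set Wsp : Fin s → Submodule ℝ (EuclideanSpace ℝ (Fin n)) :=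
    fun i => (Vlt i ⊔ U i) ⊓ (Vlt i)ᗮ with hWsp
  have hVltle : ∀ i, Vlt i ≤ ⨆ j, ⨆ _ : j ≠ i, U j :=
    fun i => iSup₂_le fun j hj => le_iSup₂ (f := fun j (_ : j ≠ i) => U j) j hj.ne
  have hdisj : ∀ i, Disjoint (Vlt i) (U i) :=
    fun i => ((hIndep i).mono_right (hVltle i)).symm
  have hWrank : ∀ i, Module.finrank ℝ (Wsp i) = d i := by
    intro i
    have h1 := Submodule.finrank_add_inf_finrank_orthogonal
      (K₁ := Vlt i) (K₂ := Vlt i ⊔ U i) le_sup_left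
    have h2 := Submodule.finrank_sup_add_finrank_inf_eq (Vlt i) (U i)
    rw [(hdisj i).eq_bot, finrank_bot, add_zero] at h2
    have h3 : Module.finrank ℝ (Wsp i) =
        Module.finrank ℝ ((Vlt i)ᗮ ⊓ (Vlt i ⊔ U i) : Submodule ℝ (EuclideanSpace ℝ (Fin n))) := by
      rw [hWsp]
      simp only []
      exact congrArg (fun K : Submodule ℝ (EuclideanSpace ℝ (Fin n)) => Module.finrank ℝ K) (inf_comm _ _)
    rw [← hd i]
    omega
  set wb : (i : Fin s) → OrthonormalBasis (Fin (d i)) ℝ (Wsp i) :=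
    fun i => (stdOrthonormalBasis ℝ (Wsp i)).reindex (finCongr (hWrank i)) with hwb
  set w : (Σ i : Fin s, Fin (d i)) → EuclideanSpace ℝ (Fin n) :=
    fun k => (wb k.1 k.2 : EuclideanSpace ℝ (Fin n)) with hw
  have hwW : ∀ k, w k ∈ Wsp k.1 := fun k => (wb k.1 k.2).2
  have hwnorm : ∀ k, ‖w k‖ = 1 := fun k => (wb k.1).orthonormal.1 k.2
  have hWle : ∀ (i i' : Fin s), i < i' → Wsp i ≤ Vlt i' := by
    intro i i' hii
    rw [hWsp]
    refine inf_le_left.trans (sup_le ?_ ?_)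
    · exact iSup₂_le fun j hj => le_iSup₂ (f := fun j (_ : j < i') => U j) j (hj.trans hii)
    · exact le_iSup₂ (f := fun j (_ : j < i') => U j) i hii
  have hwON : Orthonormal ℝ w := by
    rw [orthonormal_iff_ite]
    rintro ⟨i, j⟩ ⟨i', j'⟩
    by_cases hii : i = i'
    · subst hii
      have h := orthonormal_iff_ite.mp (wb i).orthonormal j j'
      rw [hw]
      simp only []
      rw [← Submodule.coe_inner] at *
      rw [h]
      by_cases hjj : j = j' <;> simp [hjj]
    · have hne : (⟨i, j⟩ : Σ i : Fin s, Fin (d i)) ≠ ⟨i', j'⟩ := by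
        simp [Sigma.mk.inj_iff, hii]
      rw [if_neg hne]
      rcases lt_or_gt_of_ne (fun h : i = i' => hii h) with hlt | hgt
      · have h1 : w ⟨i, j⟩ ∈ Vlt i' := hWle i i' hlt (hwW ⟨i, j⟩)
        have h2 : w ⟨i', j'⟩ ∈ (Vlt i')ᗮ := (hwW ⟨i', j'⟩).2
        exact (Submodule.mem_orthogonal _ _).mp h2 _ h1
      · have h1 : w ⟨i', j'⟩ ∈ Vlt i := hWle i' i hgt (hwW ⟨i', j'⟩)
        have h2 : w ⟨i, j⟩ ∈ (Vlt i)ᗮ := (hwW ⟨i, j⟩).2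
        rw [real_inner_comm]
        exact (Submodule.mem_orthogonal _ _).mp h2 _ h1
  have hTVlt : ∀ i, ∀ p ∈ Vlt i, T p ∈ Vlt i := by
    intro i
    have : Vlt i ≤ Submodule.comap T (Vlt i) := by
      rw [hVlt]
      refine iSup₂_le fun j hj => ?_
      intro x hx
      simp only [Submodule.mem_comap]
      rw [hTU j x hx]
      exact Submodule.smul_mem _ _ (Submodule.mem_iSup_of_mem j (Submodule.mem_iSup_of_mem hj hx))
    exact fun p hp => this hp
  have hTW : ∀ k : (Σ i : Fin s, Fin (d i)), (inner ℝ (w k) (T (w k)) : ℝ) = lam k.1 := by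
    rintro ⟨i, j⟩
    set x := w ⟨i, j⟩ with hx
    have hxW : x ∈ Wsp i := hwW ⟨i, j⟩
    have hxsup : x ∈ Vlt i ⊔ U i := hxW.1
    have hxorth : x ∈ (Vlt i)ᗮ := hxW.2
    obtain ⟨p, hp, u, hu, hpu⟩ := Submodule.mem_sup.mp hxsup
    have hTx : T x = T p + lam i • u := by
      rw [← hpu, map_add, hTU i u hu]
    have hip : (inner ℝ x p : ℝ) = 0 := by
      rw [real_inner_comm]
      exact (Submodule.mem_orthogonal _ _).mp hxorth _ hp
    have hiTp : (inner ℝ x (T p) : ℝ) = 0 := by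
      rw [real_inner_comm]
      exact (Submodule.mem_orthogonal _ _).mp hxorth _ (hTVlt i p hp)
    have hiu : (inner ℝ x u : ℝ) = 1 := by
      have hxx : (inner ℝ x x : ℝ) = 1 := by
        rw [real_inner_self_eq_norm_sq, hwnorm ⟨i, j⟩]; norm_num
      calc (inner ℝ x u : ℝ) = inner ℝ x (x - p) := by rw [← hpu]; congr 1; abel
        _ = (inner ℝ x x : ℝ) - inner ℝ x p := by rw [inner_sub_right]
        _ = 1 := by rw [hxx, hip, sub_zero]
    rw [hTx, inner_add_right, hiTp, real_inner_smul_right, hiu, mul_one, zero_add]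
  set T' := LinearMap.adjoint T with hT'
  have e1 : ∀ y : EuclideanSpace ℝ (Fin n),
      ‖y‖^2 = ∑ j, (inner ℝ y (EuclideanSpace.single j 1) : ℝ)^2 := by
    intro y
    rw [enorm_sq]
    refine Finset.sum_congr rfl fun j _ => ?_
    rw [EuclideanSpace.inner_single_right]
    simp
  have hA : ∑ k : (Σ i : Fin s, Fin (d i)), ‖T (w k)‖^2 ≤
      ∑ j, ‖T (EuclideanSpace.single j 1)‖^2 := by
    calc ∑ k : (Σ i : Fin s, Fin (d i)), ‖T (w k)‖^2
        = ∑ k : (Σ i : Fin s, Fin (d i)), ∑ j, (inner ℝ (w k) (T' (EuclideanSpace.single j 1)) : ℝ)^2 := by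
          refine Finset.sum_congr rfl fun k _ => ?_
          rw [e1 (T (w k))]
          refine Finset.sum_congr rfl fun j _ => ?_
          rw [hT', LinearMap.adjoint_inner_right]
      _ = ∑ j, ∑ k : (Σ i : Fin s, Fin (d i)), (inner ℝ (w k) (T' (EuclideanSpace.single j 1)) : ℝ)^2 := by
          rw [Finset.sum_comm]
      _ ≤ ∑ j, ‖T' (EuclideanSpace.single j 1)‖^2 := by
          refine Finset.sum_le_sum fun j _ => ?_
          have := hwON.sum_inner_products_le (s := Finset.univ) (T' (EuclideanSpace.single j 1))
          simpa [Real.norm_eq_abs, sq_abs] using this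
      _ = ∑ j, ∑ i', (inner ℝ (T (EuclideanSpace.single i' 1)) (EuclideanSpace.single j 1) : ℝ)^2 := by
          refine Finset.sum_congr rfl fun j _ => ?_
          rw [e1 (T' (EuclideanSpace.single j 1))]
          refine Finset.sum_congr rfl fun i' _ => ?_
          rw [hT', LinearMap.adjoint_inner_left, real_inner_comm]
      _ = ∑ i', ∑ j, (inner ℝ (T (EuclideanSpace.single i' 1)) (EuclideanSpace.single j 1) : ℝ)^2 := by
          rw [Finset.sum_comm]
      _ = ∑ i', ‖T (EuclideanSpace.single i' 1)‖^2 := by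
          refine Finset.sum_congr rfl fun i' _ => (e1 _).symm
  have hlow : (Dm : ℝ) ≤ ∑ k : (Σ i : Fin s, Fin (d i)), ‖T (w k)‖^2 := by
    calc (Dm : ℝ) = (Dm : ℝ) * ∑ i, (lam i)^2 := by rw [hlam, mul_one]
      _ = ∑ i, (Dm : ℝ) * (lam i)^2 := Finset.mul_sum _ _ _
      _ ≤ ∑ i, (d i : ℝ) * (lam i)^2 := by
          refine Finset.sum_le_sum fun i _ => ?_
          exact mul_le_mul_of_nonneg_right (hDd i) (sq_nonneg _)
      _ = ∑ k : (Σ i : Fin s, Fin (d i)), (lam k.1)^2 := by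
          rw [← Finset.univ_sigma_univ, Finset.sum_sigma]
          refine Finset.sum_congr rfl fun i _ => ?_
          simp [mul_comm]
      _ ≤ ∑ k : (Σ i : Fin s, Fin (d i)), ‖T (w k)‖^2 := by
          refine Finset.sum_le_sum fun k _ => ?_
          have h1 := hTW k
          have h2 : |(inner ℝ (w k) (T (w k)) : ℝ)| ≤ ‖w k‖ * ‖T (w k)‖ := abs_real_inner_le_norm _ _
          rw [hwnorm k, one_mul] at h2
          calc (lam k.1)^2 = |(inner ℝ (w k) (T (w k)) : ℝ)|^2 := by rw [h1, sq_abs]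
            _ ≤ ‖T (w k)‖^2 := pow_le_pow_left₀ (abs_nonneg _) h2 2
  rw [frob]
  exact Real.sqrt_le_sqrt (le_trans hlow hA)

lemma aux_least0 {n s : ℕ} [NeZero s] (d : Fin s → ℕ)
    (U : Fin s → Submodule ℝ (EuclideanSpace ℝ (Fin n)))
    (hd : ∀ i, Module.finrank ℝ (U i) = d i)
    (P : Fin s → (EuclideanSpace ℝ (Fin n) →ₗ[ℝ] EuclideanSpace ℝ (Fin n)))
    (hP2 : ∀ i j, i ≠ j → ∀ x ∈ U j, P i x = 0)
    (V : Submodule ℝ (EuclideanSpace ℝ (Fin n))) (hV : V = ⨆ i, U i)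
    (hP3 : ∀ i, ∀ x ∈ Vᗮ, P i x = 0)
    (i0 : Fin s) (hi0 : d i0 = 0)
    (S : Set ℝ)
    (hSdef : S = {r | ∃ lam : EuclideanSpace ℝ (Fin s), ‖lam‖ = 1 ∧
        r = frob (∑ i, lam i • P i)})
    (hSnn : ∀ r ∈ S, 0 ≤ r)
    (MhatLeast : ℝ) (hMhatLeast : MhatLeast = sInf S) (hMLnn : 0 ≤ MhatLeast) :
    MhatLeast = 0 := by
  classical
  have hU0 : U i0 = ⊥ := Submodule.finrank_eq_zero.mp (by rw [hd i0, hi0])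
  have hP0 : ∀ x, P i0 x = 0 := by
    have hker : V ≤ LinearMap.ker (P i0) := by
      rw [hV]
      refine iSup_le fun j => ?_
      intro x hx
      rw [LinearMap.mem_ker]
      by_cases hji : j = i0
      · subst hji
        rw [hU0] at hx
        have : x = 0 := hx
        rw [this, map_zero]
      · exact hP2 i0 j (fun h => hji h.symm) x hx
    intro x
    have htop : V ⊔ Vᗮ = ⊤ := Submodule.sup_orthogonal_of_hasOrthogonalProjection
    have hx : x ∈ V ⊔ Vᗮ := by rw [htop]; trivial
    obtain ⟨y, hy, z, hz, hyz⟩ := Submodule.mem_sup.mp hx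
    rw [← hyz, map_add, hP3 i0 z hz, add_zero]
    exact hker hy
  have h0mem : (0 : ℝ) ∈ S := by
    rw [hSdef]
    refine ⟨EuclideanSpace.single i0 1, by simp [EuclideanSpace.norm_single], ?_⟩
    have hPsum : (∑ i, (EuclideanSpace.single i0 1 : EuclideanSpace ℝ (Fin s)) i • P i) = 0 := by
      apply LinearMap.ext
      intro x
      rw [LinearMap.sum_apply]
      refine Finset.sum_eq_zero fun l _ => ?_
      rw [LinearMap.smul_apply]
      by_cases hl : l = i0
      · subst hl; rw [hP0 x, smul_zero]
      · rw [EuclideanSpace.single_apply, if_neg hl, zero_smul]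
    rw [hPsum]
    simp [frob]
  rw [hMhatLeast] at *
  exact le_antisymm (csInf_le ⟨0, fun r hr => hSnn r hr⟩ h0mem) hMLnn

theorem stmt7 {n s : ℕ} [NeZero s] (d : Fin s → ℕ)
    (U : Fin s → Submodule ℝ (EuclideanSpace ℝ (Fin n)))
    (hIndep : iSupIndep U)
    (hd : ∀ i, Module.finrank ℝ (U i) = d i)
    -- `v` lists the columns of a `U`-associated matrix `M`
    (v : (Σ i : Fin s, Fin (d i)) → EuclideanSpace ℝ (Fin n))
    (hON : ∀ i : Fin s, Orthonormal ℝ (fun j : Fin (d i) => v ⟨i, j⟩))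
    (hspan : ∀ i : Fin s,
      Submodule.span ℝ (Set.range fun j : Fin (d i) => v ⟨i, j⟩) = U i)
    (κM : ℝ) (hκM : κM = famSup v / famInf v)
    -- `P i` is the projection onto `U i` along the other components, zero on `U^⊥`
    (P : Fin s → (EuclideanSpace ℝ (Fin n) →ₗ[ℝ] EuclideanSpace ℝ (Fin n)))
    (hP1 : ∀ i, ∀ x ∈ U i, P i x = x)
    (hP2 : ∀ i j, i ≠ j → ∀ x ∈ U j, P i x = 0)
    (hP3 : ∀ i, ∀ x ∈ (⨆ i, U i)ᗮ, P i x = 0)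
    -- the operator norm and smallest singular value of `M̂ : λ ↦ ∑ λ_i P_i`,
    -- with Frobenius norm on the codomain `Lin(U,U)`
    (Mhat MhatLeast : ℝ)
    (hMhat : Mhat = sSup {r | ∃ lam : EuclideanSpace ℝ (Fin s), ‖lam‖ = 1 ∧
        r = frob (∑ i, lam i • P i)})
    (hMhatLeast : MhatLeast = sInf {r | ∃ lam : EuclideanSpace ℝ (Fin s), ‖lam‖ = 1 ∧
        r = frob (∑ i, lam i • P i)}) :
    Mhat ≤ κM * Real.sqrt ((Finset.univ.sup' Finset.univ_nonempty d : ℕ) : ℝ) ∧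
      Mhat / MhatLeast ≤
        κM * Real.sqrt (((Finset.univ.sup' Finset.univ_nonempty d : ℕ) : ℝ) / ((Finset.univ.inf' Finset.univ_nonempty d : ℕ) : ℝ)) := by
  classical
  set S : Set ℝ := {r | ∃ lam : EuclideanSpace ℝ (Fin s), ‖lam‖ = 1 ∧
        r = frob (∑ i, lam i • P i)} with hSdef
  set D : ℕ := Finset.univ.sup' Finset.univ_nonempty d with hD
  set Dm : ℕ := Finset.univ.inf' Finset.univ_nonempty d with hDm
  have i00 : Fin s := ⟨0, Nat.pos_of_ne_zero (NeZero.ne s)⟩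
  have hSnn : ∀ r ∈ S, 0 ≤ r := by rintro r ⟨lam, -, rfl⟩; exact Real.sqrt_nonneg _
  have hMhat_nonneg : 0 ≤ Mhat := hMhat ▸ Real.sSup_nonneg hSnn
  have hMLeast_nonneg : 0 ≤ MhatLeast := hMhatLeast ▸ Real.sInf_nonneg hSnn
  have hκ_nonneg : 0 ≤ κM := by
    rw [hκM]
    apply div_nonneg
    · exact Real.sSup_nonneg (by rintro r ⟨c, -, rfl⟩; exact norm_nonneg _)
    · exact Real.sInf_nonneg (by rintro r ⟨c, -, rfl⟩; exact norm_nonneg _)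
  have hrhs1_nonneg : 0 ≤ κM * Real.sqrt D := mul_nonneg hκ_nonneg (Real.sqrt_nonneg _)
  have hrhs2_nonneg : 0 ≤ κM * Real.sqrt ((D:ℝ)/(Dm:ℝ)) :=
    mul_nonneg hκ_nonneg (Real.sqrt_nonneg _)
  have hlamsq : ∀ lam : EuclideanSpace ℝ (Fin s), ‖lam‖ = 1 → ∑ i, (lam i)^2 = 1 := by
    intro lam hlam
    have := enorm_sq lam
    rw [hlam] at this
    simpa using this.symm
  have hTU : ∀ (lam : EuclideanSpace ℝ (Fin s)) (i : Fin s), ∀ x ∈ U i,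
      (∑ l, lam l • P l) x = lam i • x := by
    intro lam i x hx
    rw [LinearMap.sum_apply, Finset.sum_eq_single i]
    · simp [hP1 i x hx]
    · intro l _ hl; simp [hP2 l i hl x hx]
    · simp
  have hTperp : ∀ (lam : EuclideanSpace ℝ (Fin s)), ∀ x ∈ (⨆ i, U i)ᗮ,
      (∑ l, lam l • P l) x = 0 := by
    intro lam x hx
    rw [LinearMap.sum_apply]
    exact Finset.sum_eq_zero fun l _ => by simp [hP3 l x hx]
  by_cases hem : IsEmpty (Σ i : Fin s, Fin (d i))
  · have hdz : ∀ i, d i = 0 := by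
      intro i
      by_contra h
      exact hem.false ⟨i, ⟨0, Nat.pos_of_ne_zero h⟩⟩
    have hU : ∀ i, U i = ⊥ := fun i => Submodule.finrank_eq_zero.mp (by rw [hd i, hdz i])
    have hsupU : (⨆ i, U i) = ⊥ := by simp [hU]
    have hPz : ∀ i x, P i x = 0 := by
      intro i x
      apply hP3 i
      rw [hsupU, Submodule.bot_orthogonal_eq_top]
      trivial
    have hfz : ∀ lam : EuclideanSpace ℝ (Fin s), frob (∑ i, lam i • P i) = 0 := by
      intro lam
      have hz : ∀ k, (∑ i, lam i • P i) (EuclideanSpace.single k 1) = 0 := by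
        intro k
        rw [LinearMap.sum_apply]
        exact Finset.sum_eq_zero fun l _ => by simp [hPz]
      simp [frob, hz]
    have hSsing : S = {0} := by
      apply Set.eq_singleton_iff_unique_mem.mpr
      constructor
      · exact ⟨EuclideanSpace.single i00 1, by simp [EuclideanSpace.norm_single], (hfz _).symm⟩
      · rintro r ⟨lam, -, rfl⟩; exact hfz lam
    rw [hMhat, hMhatLeast, hSsing, csSup_singleton, csInf_singleton, zero_div]
    exact ⟨hrhs1_nonneg, hrhs2_nonneg⟩
  have hne : Nonempty (Σ i : Fin s, Fin (d i)) := not_isEmpty_iff.mp hem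
  have hvU : ∀ k : (Σ i : Fin s, Fin (d i)), v k ∈ U k.1 := by
    rintro ⟨i, j⟩
    rw [← hspan i]
    exact Submodule.subset_span ⟨j, rfl⟩
  have hli : LinearIndependent ℝ v := aux_li d U hIndep v hON hspan
  set V : Submodule ℝ (EuclideanSpace ℝ (Fin n)) := ⨆ i, U i with hV
  have hvV : ∀ k, v k ∈ V := fun k => Submodule.mem_iSup_of_mem k.1 (hvU k)
  have famInf_pos : 0 < famInf v := aux_famInf_pos v hli
  have famSup_nn : 0 ≤ famSup v := Real.sSup_nonneg (by rintro r ⟨c, -, rfl⟩; exact norm_nonneg _)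
  obtain ⟨cmap, hsum⟩ := aux_cmap d U v hspan hli hvU V hV hvV
  obtain ⟨hc_le, hcol⟩ := aux_cbounds v V cmap hsum (hInf_le' v) famInf_pos
  have hDd : ∀ i, (d i : ℝ) ≤ D := fun i =>
    Nat.cast_le.mpr (hD ▸ Finset.le_sup' d (Finset.mem_univ i))
  have hDmd : ∀ i, (Dm : ℝ) ≤ d i := fun i =>
    Nat.cast_le.mpr (hDm ▸ Finset.inf'_le d (Finset.mem_univ i))
  have upper : ∀ lam : EuclideanSpace ℝ (Fin s), ‖lam‖ = 1 →
      frob (∑ i, lam i • P i) ≤ κM * Real.sqrt D := by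
    intro lam hlam
    have hT := aux_hT d U v hvU V lam (∑ i, lam i • P i) (hTU lam) (hTperp lam) cmap hsum
    have := aux_upper d D hDd v (∑ i, lam i • P i) lam (hlamsq lam hlam) cmap hT
      (famSup v) (famInf v) famSup_nn famInf_pos (hSup_le' v famSup_nn) hcol
    rw [hκM]
    exact this
  have lower : ∀ lam : EuclideanSpace ℝ (Fin s), ‖lam‖ = 1 →
      Real.sqrt Dm ≤ frob (∑ i, lam i • P i) :=
    fun lam hlam => aux_lower d Dm hDmd U hIndep hd lam (hlamsq lam hlam)
      (∑ i, lam i • P i) (hTU lam)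
  have hSne : S.Nonempty :=
    ⟨_, ⟨EuclideanSpace.single i00 1, by simp [EuclideanSpace.norm_single], rfl⟩⟩
  have part1 : Mhat ≤ κM * Real.sqrt D := by
    rw [hMhat]
    exact Real.sSup_le (by rintro r ⟨lam, hlam, rfl⟩; exact upper lam hlam) hrhs1_nonneg
  refine ⟨part1, ?_⟩
  by_cases hDm0 : Dm = 0
  · obtain ⟨i0, -, hi0⟩ := Finset.exists_mem_eq_inf' (Finset.univ_nonempty (α := Fin s)) d
    have hdi0 : d i0 = 0 := by rw [← hi0, ← hDm]; exact hDm0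
    have hML0 : MhatLeast = 0 :=
      aux_least0 d U hd P hP2 V hV hP3 i0 hdi0 S hSdef hSnn MhatLeast hMhatLeast hMLeast_nonneg
    rw [hML0, div_zero]
    exact hrhs2_nonneg
  · have hDm1 : (0:ℝ) < (Dm:ℝ) := by exact_mod_cast Nat.pos_of_ne_zero hDm0
    have hsq_pos : 0 < Real.sqrt Dm := Real.sqrt_pos.mpr hDm1
    have hML_ge : Real.sqrt Dm ≤ MhatLeast := by
      rw [hMhatLeast]
      exact le_csInf hSne (by rintro r ⟨lam, hlam, rfl⟩; exact lower lam hlam)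
    calc Mhat / MhatLeast ≤ Mhat / Real.sqrt Dm :=
          div_le_div_of_nonneg_left hMhat_nonneg hsq_pos hML_ge
      _ ≤ (κM * Real.sqrt D) / Real.sqrt Dm := by gcongr
      _ = κM * Real.sqrt ((D:ℝ)/(Dm:ℝ)) := by
          rw [Real.sqrt_div (Nat.cast_nonneg _), mul_div_assoc]
end

section
/- In the subspace clustering setting, let (D, E) be any element of the adjoint algebra of the first-order partial derivative operators acting from U = span{ℓ_1^d,...,ℓ_N^d} to V = span{ℓ_1^{d−1},...,ℓ_N^{d−1}} (with d ≥ 2). Then there exist constants c_1,...,c_N ∈ R such that D·ℓ_i^d = c_i·ℓ_i^d and E·ℓ_i^{d−1} = c_i·ℓ_i^{d−1} for all i ∈ [N]. -/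
open MvPolynomial

private lemma degree_univ {n : ℕ} (v : Fin n →₀ ℕ) : Finsupp.degree v = ∑ j, v j :=
  Finset.sum_subset (Finset.subset_univ _) (fun x _ hx => Finsupp.notMem_support_iff.mp hx)

private lemma sub_single_add {n : ℕ} (u : Fin n →₀ ℕ) (j : Fin n) (h : u j ≠ 0) :
    Finsupp.single j 1 + (u - Finsupp.single j 1) = u := by
  ext k
  simp only [Finsupp.add_apply, Finsupp.tsub_apply, Finsupp.single_apply]
  by_cases hk : j = k
  · subst hk; simp; omega
  · simp [hk]

private lemma X_mul_pderiv_monomial {n : ℕ} (u : Fin n →₀ ℕ) (r : ℝ) (j : Fin n) :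
    X j * pderiv j (monomial u r) = (u j : ℝ) • monomial u r := by
  rw [pderiv_monomial]
  rcases Nat.eq_zero_or_pos (u j) with h | h
  · simp [h]
  · rw [X, monomial_mul, one_mul, sub_single_add u j h.ne', smul_monomial]
    congr 1
    simp [mul_comm]

private lemma euler_id {n m : ℕ} {q : MvPolynomial (Fin n) ℝ} (hq : q.IsHomogeneous m) :
    ∑ j, X j * pderiv j q = (m : ℝ) • q := by
  conv_lhs => rw [q.as_sum]
  conv_rhs => rw [q.as_sum]
  simp only [map_sum, Finset.mul_sum, Finset.smul_sum]
  rw [Finset.sum_comm]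
  refine Finset.sum_congr rfl fun u hu => ?_
  have hdeg : Finsupp.degree u = m := by
    have := hq (mem_support_iff.mp hu)
    rw [Finsupp.degree_eq_weight_one]
    exact this
  calc ∑ j, X j * pderiv j (monomial u (coeff u q))
      = ∑ j, (u j : ℝ) • monomial u (coeff u q) := by
        refine Finset.sum_congr rfl fun j _ => X_mul_pderiv_monomial u (coeff u q) j
    _ = ((∑ j, u j : ℕ) : ℝ) • monomial u (coeff u q) := by
        rw [← Finset.sum_smul]; norm_cast
    _ = (m : ℝ) • monomial u (coeff u q) := by rw [← degree_univ, hdeg]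

private lemma pderiv_isHomog {n m : ℕ} {q : MvPolynomial (Fin n) ℝ}
    (hq : q.IsHomogeneous m) (j : Fin n) : (pderiv j q).IsHomogeneous (m - 1) := by
  conv_lhs => rw [q.as_sum]
  rw [map_sum]
  refine MvPolynomial.IsHomogeneous.sum _ _ _ fun u hu => ?_
  rw [pderiv_monomial]
  rcases Nat.eq_zero_or_pos (u j) with h | h
  · simp [h, isHomogeneous_zero]
  · have hdeg : Finsupp.degree u = m := by
      have := hq (mem_support_iff.mp hu)
      rw [Finsupp.degree_eq_weight_one]; exact this
    refine isHomogeneous_monomial _ ?_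
    rw [degree_univ] at hdeg ⊢
    have h2 : ∑ k, u k = ∑ k ∈ Finset.univ.erase j, u k + u j :=
      (Finset.sum_erase_add _ _ (Finset.mem_univ j)).symm
    have h1 : ∑ k, (u - Finsupp.single j 1 : Fin n →₀ ℕ) k
        = ∑ k ∈ Finset.univ.erase j, u k + (u j - 1) := by
      rw [← Finset.sum_erase_add _ _ (Finset.mem_univ j)]
      congr 1
      · refine Finset.sum_congr rfl fun k hk => ?_
        have : j ≠ k := fun e => (Finset.mem_erase.mp hk).1 e.symm
        simp [Finsupp.tsub_apply, Finsupp.single_apply, this]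
      · simp [Finsupp.tsub_apply, Finsupp.single_apply]
    omega

private lemma pderiv_comm' {n : ℕ} (j k : Fin n) (q : MvPolynomial (Fin n) ℝ) :
    pderiv j (pderiv k q) = pderiv k (pderiv j q) := by
  induction q using MvPolynomial.induction_on' with
  | monomial u r =>
    simp only [pderiv_monomial]
    rcases eq_or_ne j k with rfl | hjk
    · rfl
    · have h1 : (u - Finsupp.single k 1 : Fin n →₀ ℕ) j = u j := by
        have : k ≠ j := fun e => hjk e.symm
        simp [Finsupp.tsub_apply, Finsupp.single_apply, this]
      have h2 : (u - Finsupp.single j 1 : Fin n →₀ ℕ) k = u k := by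
        simp [Finsupp.tsub_apply, Finsupp.single_apply, hjk]
      rw [h1, h2, tsub_right_comm]
      congr 1
      ring
  | add p q hp hq => simp [hp, hq]

private lemma homog_zero_eq_C {n : ℕ} {q : MvPolynomial (Fin n) ℝ}
    (hq : q.IsHomogeneous 0) : q = C (coeff 0 q) := by
  ext u
  rcases eq_or_ne u 0 with rfl | hu
  · simp
  · rw [hq.coeff_eq_zero (by simpa [Finsupp.degree_eq_zero_iff] using hu), coeff_C,
      if_neg (fun e => hu e.symm)]

private lemma L_homog {n : ℕ} (b : Fin n → ℝ) :
    (∑ j, C (b j) * X j : MvPolynomial (Fin n) ℝ).IsHomogeneous 1 :=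
  MvPolynomial.IsHomogeneous.sum _ _ _ fun j _ => isHomogeneous_C_mul_X (b j) j

private lemma pderiv_L {n : ℕ} (b : Fin n → ℝ) (j : Fin n) :
    pderiv j (∑ k, C (b k) * X k : MvPolynomial (Fin n) ℝ) = C (b j) := by
  rw [map_sum]
  rw [Finset.sum_eq_single j]
  · rw [pderiv_C_mul, pderiv_X_self, mul_one]
  · intro k _ hk
    rw [pderiv_C_mul, pderiv_X_of_ne hk, mul_zero]
  · simp

private lemma key_lemma {n : ℕ} (b : Fin n → ℝ) (j₀ : Fin n) (hb : b j₀ ≠ 0) :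
    ∀ (m : ℕ) (q : MvPolynomial (Fin n) ℝ), q.IsHomogeneous m →
    (∀ j, C (b j₀) * pderiv j q = C (b j) * pderiv j₀ q) →
    ∃ c : ℝ, q = c • (∑ j, C (b j) * X j) ^ m := by
  intro m
  induction m with
  | zero =>
    intro q hq _
    exact ⟨coeff 0 q, by rw [pow_zero, smul_eq_C_mul, mul_one]; exact homog_zero_eq_C hq⟩
  | succ m ih =>
    intro q hq hrel
    set L : MvPolynomial (Fin n) ℝ := ∑ j, C (b j) * X j with hLdef
    have hr : (pderiv j₀ q).IsHomogeneous m := by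
      simpa using pderiv_isHomog hq j₀
    have hrrel : ∀ j, C (b j₀) * pderiv j (pderiv j₀ q) = C (b j) * pderiv j₀ (pderiv j₀ q) := by
      intro j
      rw [pderiv_comm' j j₀, ← pderiv_C_mul, hrel j, pderiv_C_mul]
    obtain ⟨c', hc'⟩ := ih (pderiv j₀ q) hr hrrel
    set c : ℝ := c' / ((m + 1) * b j₀) with hcdef
    refine ⟨c, ?_⟩
    set s : MvPolynomial (Fin n) ℝ := q - c • L ^ (m + 1) with hsdef
    have hpdLpow : pderiv j₀ (L ^ (m + 1)) = ((m + 1 : ℝ) * b j₀) • L ^ m := by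
      rw [pderiv_pow, pderiv_L, Nat.add_sub_cancel, smul_eq_C_mul]
      have hcast : ((m + 1 : ℕ) : MvPolynomial (Fin n) ℝ) = C ((m + 1 : ℕ) : ℝ) := rfl
      rw [hcast]
      push_cast
      rw [C_mul]
      ring
    have hs0 : pderiv j₀ s = 0 := by
      rw [hsdef, map_sub, Derivation.map_smul, hpdLpow, hc', smul_smul]
      rw [hcdef]
      rw [div_mul_cancel₀]
      · exact sub_self _
      · positivity
    have hsj : ∀ j, pderiv j s = 0 := by
      intro j
      have hLrel : ∀ j, C (b j₀) * pderiv j (L ^ (m+1)) = C (b j) * pderiv j₀ (L ^ (m+1)) := by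
        intro j'
        rw [pderiv_pow, pderiv_pow, pderiv_L, pderiv_L]
        ring
      have hsrel : C (b j₀) * pderiv j s = C (b j) * pderiv j₀ s := by
        rw [hsdef, map_sub, map_sub, Derivation.map_smul, Derivation.map_smul,
          mul_sub, mul_sub, hrel j, mul_smul_comm, mul_smul_comm, hLrel j]
      rw [hs0, mul_zero] at hsrel
      have := mul_eq_zero.mp hsrel
      rcases this with h | h
      · exact absurd (by simpa using h : b j₀ = 0) hb
      · exact h
    have hshom : s.IsHomogeneous (m + 1) := by
      refine hq.sub ?_
      rw [smul_eq_C_mul]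
      have h := ((L_homog b).pow (m+1)).C_mul c
      simpa using h
    have hEuler := euler_id hshom
    rw [Finset.sum_congr rfl (fun j _ => by rw [hsj j, mul_zero])] at hEuler
    rw [Finset.sum_const_zero] at hEuler
    have : s = 0 := by
      have hm : ((m + 1 : ℕ) : ℝ) ≠ 0 := by positivity
      have h0 : C ((m + 1 : ℕ) : ℝ) * s = 0 := by
        rw [← smul_eq_C_mul]
        exact hEuler.symm
      rcases mul_eq_zero.mp h0 with h | h
      · exact absurd (C_injective _ ℝ (h.trans (map_zero C).symm)) hm
      · exact h
    exact sub_eq_zero.mp (by rw [← hsdef]; exact this)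

theorem stmt10 {n N d : ℕ} (hd : 2 ≤ d) (a : Fin N → (Fin n → ℝ))
    (ℓ : Fin N → MvPolynomial (Fin n) ℝ)
    (hℓ : ∀ i, ℓ i = ∑ j, C (a i j) * X j)
    (U V : Submodule ℝ (MvPolynomial (Fin n) ℝ))
    (hU : U = Submodule.span ℝ (Set.range fun i => ℓ i ^ d))
    (hV : V = Submodule.span ℝ (Set.range fun i => ℓ i ^ (d - 1)))
    -- `(D, E)` is an element of the adjoint algebra: `D` maps `U` to `U`, `E` maps `V` to `V`,
    -- and `∂_{x_j} ∘ D = E ∘ ∂_{x_j}` on `U` for every `j`.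
    (D E : MvPolynomial (Fin n) ℝ →ₗ[ℝ] MvPolynomial (Fin n) ℝ)
    (hDU : ∀ p ∈ U, D p ∈ U) (hEV : ∀ q ∈ V, E q ∈ V)
    (hAdj : ∀ j : Fin n, ∀ p ∈ U, pderiv j (D p) = E (pderiv j p)) :
    ∃ c : Fin N → ℝ, ∀ i,
      D (ℓ i ^ d) = c i • (ℓ i ^ d) ∧ E (ℓ i ^ (d - 1)) = c i • (ℓ i ^ (d - 1)) := by
  have H : ∀ i, ∃ ci : ℝ,
      D (ℓ i ^ d) = ci • (ℓ i ^ d) ∧ E (ℓ i ^ (d - 1)) = ci • (ℓ i ^ (d - 1)) := by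
    intro i
    by_cases hai : ∀ j, a i j = 0
    · have hz : ℓ i = 0 := by
        rw [hℓ i]
        simp [hai]
      refine ⟨0, ?_, ?_⟩ <;>
        simp [hz, zero_pow (by omega : d ≠ 0), zero_pow (by omega : d - 1 ≠ 0)]
    · push_neg at hai
      obtain ⟨j₀, hj₀⟩ := hai
      have hℓhom : (ℓ i).IsHomogeneous 1 := by rw [hℓ i]; exact L_homog (a i)
      have hUhom : ∀ p ∈ U, p.IsHomogeneous d := by
        intro p hp
        have hle : Submodule.span ℝ (Set.range fun i => ℓ i ^ d)
            ≤ homogeneousSubmodule (Fin n) ℝ d := by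
          rw [Submodule.span_le]
          rintro _ ⟨k, rfl⟩
          rw [SetLike.mem_coe, mem_homogeneousSubmodule]
          have hk : (ℓ k).IsHomogeneous 1 := by rw [hℓ k]; exact L_homog (a k)
          simpa using hk.pow d
        rw [hU] at hp
        exact (mem_homogeneousSubmodule _ _).mp (hle hp)
      have hmemU : ℓ i ^ d ∈ U := by
        rw [hU]; exact Submodule.subset_span ⟨i, rfl⟩
      have hpd : ∀ (e : ℕ) (j : Fin n),
          pderiv j (ℓ i ^ e) = ((e : ℝ) * a i j) • ℓ i ^ (e - 1) := by
        intro e j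
        rw [pderiv_pow]
        have : pderiv j (ℓ i) = C (a i j) := by rw [hℓ i]; exact pderiv_L (a i) j
        rw [this, smul_eq_C_mul, C_mul]
        have hcast : ((e : ℕ) : MvPolynomial (Fin n) ℝ) = C ((e : ℕ) : ℝ) := rfl
        rw [hcast]
        ring
      set q := D (ℓ i ^ d) with hqdef
      have hqhom : q.IsHomogeneous d := hUhom _ (hDU _ hmemU)
      have hrel : ∀ j, C (a i j₀) * pderiv j q = C (a i j) * pderiv j₀ q := by
        intro j
        rw [hqdef, hAdj j _ hmemU, hAdj j₀ _ hmemU, hpd, hpd, map_smul, map_smul,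
          mul_smul_comm, mul_smul_comm, smul_eq_C_mul, smul_eq_C_mul, ← mul_assoc,
          ← mul_assoc, ← C_mul, ← C_mul]
        congr 2
        ring
      obtain ⟨c, hc⟩ := key_lemma (a i) j₀ hj₀ d q hqhom hrel
      rw [← hℓ i] at hc
      refine ⟨c, hc, ?_⟩
      have h1 : pderiv j₀ q = E (pderiv j₀ (ℓ i ^ d)) := hAdj j₀ _ hmemU
      rw [hc, Derivation.map_smul, hpd, map_smul, smul_smul] at h1
      have ht : (d : ℝ) * a i j₀ ≠ 0 := by
        have : (d : ℝ) ≠ 0 := by positivity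
        exact mul_ne_zero this hj₀
      have := h1.symm
      -- ((d:ℝ) * a i j₀) • E (ℓ i ^ (d-1)) = (c * ((d:ℝ) * a i j₀)) • ℓ i ^ (d-1)
      have h2 : E (ℓ i ^ (d - 1)) = (((d : ℝ) * a i j₀)⁻¹ * (c * ((d : ℝ) * a i j₀)))
          • ℓ i ^ (d - 1) := by
        rw [mul_smul, ← this, smul_smul, inv_mul_cancel₀ ht, one_smul]
      rw [h2]
      congr 1
      field_simp
  choose c hc using H
  exact ⟨c, hc⟩
end

section
/- In the subspace clustering setting, let (D, E) be an element of the adjoint algebra with associated scalars c_1,...,c_N (i.e. D·ℓ_i^d = c_i·ℓ_i^d for all i). If I ⊆ [N] is a minimal set such that the powers {ℓ_i^{d−1} : i ∈ I} are linearly dependent, then c_i = c_{i'} for all i, i' ∈ I. -/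
open MvPolynomial

theorem stmt11 {n N d : ℕ} (hd : 2 ≤ d) (a : Fin N → (Fin n → ℝ))
    (ℓ : Fin N → MvPolynomial (Fin n) ℝ)
    (hℓ : ∀ i, ℓ i = ∑ j, C (a i j) * X j)
    (U V : Submodule ℝ (MvPolynomial (Fin n) ℝ))
    (hU : U = Submodule.span ℝ (Set.range fun i => ℓ i ^ d))
    (hV : V = Submodule.span ℝ (Set.range fun i => ℓ i ^ (d - 1)))
    -- `(D, E)` is an element of the adjoint algebra
    (D E : MvPolynomial (Fin n) ℝ →ₗ[ℝ] MvPolynomial (Fin n) ℝ)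
    (hDU : ∀ p ∈ U, D p ∈ U) (hEV : ∀ q ∈ V, E q ∈ V)
    (hAdj : ∀ j : Fin n, ∀ p ∈ U, pderiv j (D p) = E (pderiv j p))
    -- with associated scalars `c`
    (c : Fin N → ℝ)
    (hc : ∀ i, D (ℓ i ^ d) = c i • (ℓ i ^ d) ∧ E (ℓ i ^ (d - 1)) = c i • (ℓ i ^ (d - 1)))
    -- `I` is a minimal linearly dependent set among `{ℓ_i^{d-1}}`
    (I : Finset (Fin N))
    (hdep : ¬ LinearIndependent ℝ (fun i : I => ℓ i.1 ^ (d - 1)))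
    (hmin : ∀ J : Finset (Fin N), J ⊂ I →
      LinearIndependent ℝ (fun i : J => ℓ i.1 ^ (d - 1))) :
    ∀ i ∈ I, ∀ i' ∈ I, c i = c i' := by
  classical
  obtain ⟨g, hsum, i0, hgi0⟩ := Fintype.not_linearIndependent_iff.mp hdep
  have hE : ∀ i : Fin N, E (ℓ i ^ (d - 1)) = c i • (ℓ i ^ (d - 1)) := fun i => (hc i).2
  set G : Fin N → ℝ := fun i => if h : i ∈ I then g ⟨i, h⟩ else 0 with hGdef
  have hGI : ∀ (i : ↥I), G i.1 = g i := by
    intro i; simp only [hGdef, dif_pos i.2]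
  have hGsum : ∑ i ∈ I, G i • ℓ i ^ (d - 1) = 0 := by
    rw [← Finset.sum_coe_sort I (fun i => G i • ℓ i ^ (d - 1)), ← hsum]
    exact Finset.sum_congr rfl fun i _ => by rw [hGI]
  have hGne : ∀ i ∈ I, G i ≠ 0 := by
    intro j hj hGj
    have hind := hmin (I.erase j) (Finset.erase_ssubset hj)
    rw [Fintype.linearIndependent_iff] at hind
    have hers : ∑ i ∈ I.erase j, G i • ℓ i ^ (d - 1) = 0 := by
      rw [← hGsum]
      apply Finset.sum_subset (Finset.erase_subset _ _)
      intro x hx hnx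
      have hxj : x = j := by
        by_contra h; exact hnx (Finset.mem_erase.mpr ⟨h, hx⟩)
      rw [hxj, hGj, zero_smul]
    have key := hind (fun i => G i.1) (by
      rw [Finset.sum_coe_sort (I.erase j) (fun i => G i • ℓ i ^ (d - 1))]
      exact hers)
    have hne : (i0 : Fin N) ≠ j := fun h => hgi0 (by rw [← hGI i0, h, hGj])
    have hz : G i0.1 = 0 := key ⟨i0.1, Finset.mem_erase.mpr ⟨hne, i0.2⟩⟩
    exact hgi0 ((hGI i0).symm.trans hz)
  have main : ∀ i ∈ I, c i = c i0.1 := by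
    intro i hi
    by_cases h : i = i0.1
    · rw [h]
    · have hEsum : ∑ i ∈ I, (G i * c i) • ℓ i ^ (d - 1) = 0 := by
        have h2 := congrArg E hGsum
        rw [map_sum, map_zero] at h2
        rw [← h2]
        refine Finset.sum_congr rfl fun x _ => ?_
        rw [map_smul, hE, smul_smul]
      have hrel : ∑ i ∈ I, (G i * (c i - c i0.1)) • ℓ i ^ (d - 1) = 0 := by
        have heq : ∑ i ∈ I, (G i * (c i - c i0.1)) • ℓ i ^ (d - 1)
            = ∑ i ∈ I, (G i * c i) • ℓ i ^ (d - 1)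
              - c i0.1 • ∑ i ∈ I, G i • ℓ i ^ (d - 1) := by
          rw [Finset.smul_sum, ← Finset.sum_sub_distrib]
          refine Finset.sum_congr rfl fun x _ => ?_
          rw [smul_smul, ← sub_smul]
          congr 1
          ring
        rw [heq, hEsum, hGsum, smul_zero, sub_zero]
      have hers : ∑ i ∈ I.erase i0.1, (G i * (c i - c i0.1)) • ℓ i ^ (d - 1) = 0 := by
        rw [← hrel]
        apply Finset.sum_subset (Finset.erase_subset _ _)
        intro x hx hnx
        have hxj : x = i0.1 := by
          by_contra hh; exact hnx (Finset.mem_erase.mpr ⟨hh, hx⟩)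
        rw [hxj]; simp
      have hind := hmin (I.erase i0.1) (Finset.erase_ssubset i0.2)
      rw [Fintype.linearIndependent_iff] at hind
      have key := hind (fun x => G x.1 * (c x.1 - c i0.1)) (by
        rw [Finset.sum_coe_sort (I.erase i0.1)
          (fun i => (G i * (c i - c i0.1)) • ℓ i ^ (d - 1))]
        exact hers)
      have hz := key ⟨i, Finset.mem_erase.mpr ⟨h, hi⟩⟩
      have hG := hGne i hi
      rcases mul_eq_zero.mp hz with h1 | h1
      · exact absurd h1 hG
      · linarith
  intro i hi i' hi'
  rw [main i hi, main i' hi']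
end

section
/- For the base case n = 2: let α_1,...,α_{k+1} be distinct reals and define p_i(x_1,x_2) = Π_{j≠i}(x_1 + α_j x_2) for i ∈ [k+1]. Then p_1,...,p_{k+1} form a basis of the space of degree-k homogeneous polynomials in two variables. -/
open MvPolynomial

private noncomputable def dvec (k : ℕ) (a : Fin (k + 1)) : Fin 2 →₀ ℕ :=
  Finsupp.single 0 (a : ℕ) + Finsupp.single 1 (k - a)

private lemma deg2 (d : Fin 2 →₀ ℕ) : d.degree = d 0 + d 1 := by
  rw [Finsupp.degree_apply, Finset.sum_subset (Finset.subset_univ _), Fin.sum_univ_two]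
  intro x _ hx
  simpa using Finsupp.notMem_support_iff.mp hx

private lemma dvec_apply0 (k : ℕ) (a : Fin (k + 1)) : dvec k a 0 = (a : ℕ) := by
  simp [dvec, Finsupp.single_apply]

private lemma dvec_apply1 (k : ℕ) (a : Fin (k + 1)) : dvec k a 1 = k - a := by
  simp [dvec, Finsupp.single_apply]

private lemma dvec_degree (k : ℕ) (a : Fin (k + 1)) : (dvec k a).degree = k := by
  rw [deg2, dvec_apply0, dvec_apply1]
  exact Nat.add_sub_cancel' a.is_le

private lemma dvec_injective (k : ℕ) : Function.Injective (dvec k) := by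
  intro a b hab
  have := congrArg (fun f : Fin 2 →₀ ℕ => f 0) hab
  simp only [dvec_apply0] at this
  exact Fin.ext this

theorem stmt13 {k : ℕ} (α : Fin (k + 1) → ℝ) (hα : Function.Injective α)
    (p : Fin (k + 1) → MvPolynomial (Fin 2) ℝ)
    (hp : ∀ i, p i = ∏ j ∈ Finset.univ.erase i, (X 0 + C (α j) * X 1)) :
    LinearIndependent ℝ p ∧
      Submodule.span ℝ (Set.range p) = homogeneousSubmodule (Fin 2) ℝ k := by
  set W := homogeneousSubmodule (Fin 2) ℝ k with hW
  -- each p i is homogeneous of degree k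
  have hmem : ∀ i, p i ∈ W := by
    intro i
    rw [mem_homogeneousSubmodule, hp i]
    have hcard : ∑ _j ∈ Finset.univ.erase i, 1 = k := by
      rw [Finset.sum_const, smul_eq_mul, mul_one, Finset.card_erase_of_mem (Finset.mem_univ i),
        Finset.card_univ, Fintype.card_fin, Nat.add_sub_cancel]
    have := MvPolynomial.IsHomogeneous.prod (Finset.univ.erase i)
      (fun j => (X 0 + C (α j) * X 1 : MvPolynomial (Fin 2) ℝ)) (fun _ => 1) (fun j _ => by
        have h1 : (X (R := ℝ) (0 : Fin 2)).IsHomogeneous 1 := isHomogeneous_X _ _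
        have h2 : (C (α j) * X (1 : Fin 2)).IsHomogeneous 1 := by
          simpa using (isHomogeneous_C (Fin 2) (α j)).mul (isHomogeneous_X ℝ (1 : Fin 2))
        simpa using h1.add h2)
    simpa only [hcard] using this
  -- linear independence via evaluation at (-α i, 1)
  have hind : LinearIndependent ℝ p := by
    rw [Fintype.linearIndependent_iff]
    intro g hg i
    have h0 := congrArg (eval ![-α i, 1]) hg
    rw [map_sum, map_zero] at h0
    have heval : ∀ j, eval ![-α i, 1] (g j • p j)
        = g j * ∏ j' ∈ Finset.univ.erase j, (-α i + α j') := by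
      intro j
      rw [smul_eval, hp j, map_prod]
      congr 1
      refine Finset.prod_congr rfl fun j' _ => ?_
      simp [Matrix.cons_val_zero, Matrix.cons_val_one]
    rw [Finset.sum_congr rfl fun j _ => heval j] at h0
    rw [Finset.sum_eq_single i (fun j _ hj => by
        rw [Finset.prod_eq_zero (Finset.mem_erase.mpr ⟨Ne.symm hj, Finset.mem_univ i⟩)
          (by ring), mul_zero])
      (fun h => absurd (Finset.mem_univ i) h)] at h0
    have hne : (∏ j' ∈ Finset.univ.erase i, (-α i + α j')) ≠ 0 := by
      refine Finset.prod_ne_zero_iff.mpr fun j' hj' => ?_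
      have : α j' ≠ α i := fun h => (Finset.mem_erase.mp hj').1 (hα h)
      intro h
      exact this (by linarith)
    exact (mul_eq_zero.mp h0).resolve_right hne
  refine ⟨hind, ?_⟩
  -- span ≤ W
  have hle : Submodule.span ℝ (Set.range p) ≤ W := by
    rw [Submodule.span_le]
    rintro _ ⟨i, rfl⟩
    exact hmem i
  -- the monomial family
  set b : Fin (k + 1) → MvPolynomial (Fin 2) ℝ := fun a => monomial (dvec k a) 1 with hb
  have hb_ind : LinearIndependent ℝ b := by
    have := (basisMonomials (Fin 2) ℝ).linearIndependent.comp (dvec k) (dvec_injective k)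
    rwa [coe_basisMonomials] at this
  have hb_span : Submodule.span ℝ (Set.range b) = W := by
    apply le_antisymm
    · rw [Submodule.span_le]
      rintro _ ⟨a, rfl⟩
      exact isHomogeneous_monomial 1 (dvec_degree k a)
    · intro q hq
      rw [mem_homogeneousSubmodule] at hq
      rw [q.as_sum]
      refine Submodule.sum_mem _ fun v hv => ?_
      have hdeg : v.degree = k := by
        by_contra h
        exact (MvPolynomial.mem_support_iff.mp hv) (hq.coeff_eq_zero h)
      have hv0 : v 0 ≤ k := hdeg ▸ Finsupp.le_degree 0 v
      have hveq : v = dvec k ⟨v 0, Nat.lt_succ_of_le hv0⟩ := by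
        ext t
        have hsum := deg2 v
        rw [hdeg] at hsum
        fin_cases t
        · simp only [Fin.mk_zero, dvec_apply0]
        · simp only [Fin.mk_one, dvec_apply1]
          omega
      have : monomial v (coeff v q) = coeff v q • b ⟨v 0, Nat.lt_succ_of_le hv0⟩ := by
        rw [hb]
        simp only [smul_monomial, smul_eq_mul, mul_one]
        rw [← hveq]
      rw [this]
      exact Submodule.smul_mem _ _ (Submodule.subset_span ⟨_, rfl⟩)
  haveI : FiniteDimensional ℝ (Submodule.span ℝ (Set.range b)) :=
    FiniteDimensional.span_of_finite ℝ (Set.finite_range b)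
  haveI hfd : FiniteDimensional ℝ W := hb_span ▸ inferInstance
  have hrW : Module.finrank ℝ W = k + 1 := by
    rw [← hb_span, finrank_span_eq_card hb_ind, Fintype.card_fin]
  have hrs : Module.finrank ℝ (Submodule.span ℝ (Set.range p)) = k + 1 := by
    rw [finrank_span_eq_card hind, Fintype.card_fin]
  exact Submodule.eq_of_le_of_finrank_le hle (by rw [hrW, hrs])
end

section
/- Let A be the matrix with columns being the polynomials (a_i·x)^d ∈ R[x]^{=d} for points a_1,...,a_N ∈ R^n of unit norm, written in the Bombieri orthonormal basis, and let Ã be the analogous matrix for points ã_1,...,ã_N of unit norm with ‖a_i − ã_i‖ ≤ ε for all i. Then the Frobenius norm of A − Ã is at most √N·d·ε. -/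
open MvPolynomial

/-- The Bombieri inner product on degree-`d` homogeneous polynomials:
`⟨x^α, x^β⟩ = α!/d!` if `α = β` and `0` otherwise. -/
noncomputable def bombieri {n : ℕ} (d : ℕ) (p q : MvPolynomial (Fin n) ℝ) : ℝ :=
  ∑ α ∈ p.support ∪ q.support,
    p.coeff α * q.coeff α * ((∏ i, ((α i).factorial : ℝ)) / (d.factorial : ℝ))

/-- The linear form `a·x`. -/
noncomputable def linForm {n : ℕ} (a : Fin n → ℝ) : MvPolynomial (Fin n) ℝ :=
  ∑ j, C (a j) * X j

open Finset

/-- The finset of monomial exponents of total degree `d`. -/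
noncomputable def expSet (n d : ℕ) : Finset (Fin n →₀ ℕ) :=
  (piAntidiag (univ : Finset (Fin n)) d).map (Finsupp.equivFunOnFinite.symm.toEmbedding)

lemma linForm_pow_eq {n : ℕ} (a : Fin n → ℝ) (d : ℕ) :
    linForm a ^ d =
      ∑ k ∈ piAntidiag (univ : Finset (Fin n)) d,
        monomial (Finsupp.equivFunOnFinite.symm k)
          ((Nat.multinomial univ k : ℝ) * ∏ j, a j ^ k j) := by
  rw [linForm, Finset.sum_pow_eq_sum_piAntidiag]
  refine Finset.sum_congr rfl fun k hk => ?_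
  rw [monomial_eq, Finsupp.prod_fintype]
  · simp only [mul_pow, Finset.prod_mul_distrib, ← C_pow, ← map_prod]
    simp only [Finsupp.coe_equivFunOnFinite_symm]
    rw [map_mul, ← map_natCast (C : ℝ →+* MvPolynomial (Fin n) ℝ)]
    ring
  · intro i; exact pow_zero _

lemma coeff_linForm_pow {n : ℕ} (a : Fin n → ℝ) (d : ℕ) (α : Fin n →₀ ℕ) :
    coeff α (linForm a ^ d) =
      if ⇑α ∈ piAntidiag (univ : Finset (Fin n)) d then
        (Nat.multinomial univ ⇑α : ℝ) * ∏ j, a j ^ α j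
      else 0 := by
  rw [linForm_pow_eq, MvPolynomial.coeff_sum]
  simp only [coeff_monomial, Equiv.symm_apply_eq]
  have hc : (Finsupp.equivFunOnFinite α : Fin n → ℕ) = ⇑α := rfl
  simp only [hc]
  rw [Finset.sum_ite_eq' (piAntidiag (univ : Finset (Fin n)) d) (⇑α)
    (fun k => (Nat.multinomial univ k : ℝ) * ∏ j, a j ^ k j)]

lemma support_linForm_pow {n : ℕ} (a : Fin n → ℝ) (d : ℕ) :
    (linForm a ^ d).support ⊆ expSet n d := by
  intro α hα
  rw [mem_support_iff, coeff_linForm_pow] at hα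
  rw [expSet, Finset.mem_map_equiv]
  split_ifs at hα with h
  · simpa using h
  · exact absurd rfl hα

lemma bombieri_eq_sum_subset {n : ℕ} (d : ℕ) (p q : MvPolynomial (Fin n) ℝ)
    (T : Finset (Fin n →₀ ℕ)) (hp : p.support ⊆ T) (hq : q.support ⊆ T) :
    bombieri d p q = ∑ α ∈ T,
      p.coeff α * q.coeff α * ((∏ i, ((α i).factorial : ℝ)) / (d.factorial : ℝ)) := by
  rw [bombieri]
  refine Finset.sum_subset (Finset.union_subset hp hq) fun α _ hα => ?_
  have : p.coeff α = 0 := by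
    rw [← notMem_support_iff]
    exact fun h => hα (Finset.mem_union_left _ h)
  simp [this]

lemma sum_expSet_eq {n : ℕ} (d : ℕ) (a b : Fin n → ℝ) :
    ∑ α ∈ expSet n d, coeff α (linForm a ^ d) * coeff α (linForm b ^ d) *
      ((∏ i, ((α i).factorial : ℝ)) / (d.factorial : ℝ)) = (∑ j, a j * b j) ^ d := by
  rw [expSet, Finset.sum_map, Finset.sum_pow_eq_sum_piAntidiag]
  refine Finset.sum_congr rfl fun k hk => ?_
  simp only [Equiv.coe_toEmbedding]
  have hcoe : ∀ j, (Finsupp.equivFunOnFinite.symm k) j = k j := fun j => rfl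
  have hmem : ⇑(Finsupp.equivFunOnFinite.symm k) ∈ piAntidiag (univ : Finset (Fin n)) d := by
    simpa [Finsupp.coe_equivFunOnFinite_symm] using hk
  rw [coeff_linForm_pow, coeff_linForm_pow, if_pos hmem, if_pos hmem]
  have hmc : Nat.multinomial univ ⇑(Finsupp.equivFunOnFinite.symm k) =
      Nat.multinomial univ k := rfl
  rw [hmc]
  simp only [hcoe]
  have hsum : ∑ i, k i = d := by
    rw [Finset.mem_piAntidiag] at hk
    exact hk.1
  have hP : (∏ i, ((k i).factorial : ℝ)) = ((∏ i, (k i).factorial : ℕ) : ℝ) := by push_cast; rfl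
  have hspec : (∏ i, ((k i).factorial : ℝ)) * (Nat.multinomial univ k : ℝ) =
      (d.factorial : ℝ) := by
    rw [hP, ← Nat.cast_mul, Nat.multinomial_spec, hsum]
  have hd : (d.factorial : ℝ) ≠ 0 := Nat.cast_ne_zero.mpr d.factorial_ne_zero
  rw [hP]
  have hprod : (∏ i, (a i * b i) ^ k i) = (∏ i, a i ^ k i) * ∏ i, b i ^ k i := by
    simp [mul_pow, Finset.prod_mul_distrib]
  rw [hprod]
  field_simp
  linear_combination ((Nat.multinomial univ k : ℝ) * (∏ i, a i ^ k i) * (∏ i, b i ^ k i)) * hspec -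
    ((Nat.multinomial univ k : ℝ) ^ 2 * (∏ i, a i ^ k i) * (∏ i, b i ^ k i)) * hP

lemma bombieri_sub_eq {n : ℕ} (d : ℕ) (a b : Fin n → ℝ) :
    bombieri d (linForm a ^ d - linForm b ^ d) (linForm a ^ d - linForm b ^ d) =
      (∑ j, a j * a j) ^ d - 2 * (∑ j, a j * b j) ^ d + (∑ j, b j * b j) ^ d := by
  have hsupp : (linForm a ^ d - linForm b ^ d).support ⊆ expSet n d :=
    (MvPolynomial.support_sub _ _ _).trans
      (Finset.union_subset (support_linForm_pow a d) (support_linForm_pow b d))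
  rw [bombieri_eq_sum_subset d _ _ (expSet n d) hsupp hsupp]
  have expand : ∀ α ∈ expSet n d,
      (linForm a ^ d - linForm b ^ d).coeff α * (linForm a ^ d - linForm b ^ d).coeff α *
        ((∏ i, ((α i).factorial : ℝ)) / (d.factorial : ℝ)) =
      (coeff α (linForm a ^ d) * coeff α (linForm a ^ d) *
          ((∏ i, ((α i).factorial : ℝ)) / (d.factorial : ℝ)) -
        2 * (coeff α (linForm a ^ d) * coeff α (linForm b ^ d) *
          ((∏ i, ((α i).factorial : ℝ)) / (d.factorial : ℝ)))) +
        coeff α (linForm b ^ d) * coeff α (linForm b ^ d) *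
          ((∏ i, ((α i).factorial : ℝ)) / (d.factorial : ℝ)) := by
    intro α _
    rw [MvPolynomial.coeff_sub]
    ring
  rw [Finset.sum_congr rfl expand, Finset.sum_add_distrib, Finset.sum_sub_distrib,
    ← Finset.mul_sum, sum_expSet_eq, sum_expSet_eq, sum_expSet_eq]

lemma bombieri_sub_le {n : ℕ} (d : ℕ) (ε : ℝ) (a b : Fin n → ℝ)
    (ha : ∑ j, a j ^ 2 = 1) (hb : ∑ j, b j ^ 2 = 1)
    (hclose : Real.sqrt (∑ j, (a j - b j) ^ 2) ≤ ε) :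
    bombieri d (linForm a ^ d - linForm b ^ d) (linForm a ^ d - linForm b ^ d) ≤
      (d : ℝ) ^ 2 * ε ^ 2 := by
  set t : ℝ := ∑ j, a j * b j with ht
  have haa : (∑ j, a j * a j) = 1 := by
    rw [← ha]; exact Finset.sum_congr rfl fun j _ => (sq (a j)).symm
  have hbb : (∑ j, b j * b j) = 1 := by
    rw [← hb]; exact Finset.sum_congr rfl fun j _ => (sq (b j)).symm
  have hdiff : (∑ j, (a j - b j) ^ 2) = 2 - 2 * t := by
    have : ∀ j, (a j - b j) ^ 2 = a j ^ 2 + b j ^ 2 - 2 * (a j * b j) := fun j => by ring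
    rw [Finset.sum_congr rfl fun j _ => this j]
    rw [Finset.sum_sub_distrib, Finset.sum_add_distrib, ha, hb, ← Finset.mul_sum, ← ht]
    ring
  have hnonneg : (0:ℝ) ≤ ∑ j, (a j - b j) ^ 2 :=
    Finset.sum_nonneg fun j _ => sq_nonneg _
  have hde : 2 - 2 * t ≤ ε ^ 2 := by
    rw [← hdiff]
    calc ∑ j, (a j - b j) ^ 2 = Real.sqrt (∑ j, (a j - b j) ^ 2) ^ 2 := by
          rw [Real.sq_sqrt hnonneg]
      _ ≤ ε ^ 2 := by
          apply sq_le_sq'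
          · nlinarith [Real.sqrt_nonneg (∑ j, (a j - b j) ^ 2)]
          · exact hclose
  have ht1 : t ≤ 1 := by nlinarith
  have ht2 : -1 ≤ t := by
    have : (0:ℝ) ≤ ∑ j, (a j + b j) ^ 2 := Finset.sum_nonneg fun j _ => sq_nonneg _
    have hsum : (∑ j, (a j + b j) ^ 2) = 2 + 2 * t := by
      have he : ∀ j, (a j + b j) ^ 2 = a j ^ 2 + b j ^ 2 + 2 * (a j * b j) := fun j => by ring
      rw [Finset.sum_congr rfl fun j _ => he j, Finset.sum_add_distrib, Finset.sum_add_distrib,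
        ha, hb, ← Finset.mul_sum, ← ht]
      ring
    nlinarith
  have htabs : |t| ≤ 1 := abs_le.mpr ⟨ht2, ht1⟩
  rw [bombieri_sub_eq, haa, hbb, one_pow, ← ht]
  have hgeom : 1 - t ^ d ≤ d * (1 - t) := by
    have h1 : t ^ d - 1 = (∑ i ∈ Finset.range d, t ^ i) * (t - 1) := (geom_sum_mul t d).symm
    have h2 : (∑ i ∈ Finset.range d, t ^ i) ≤ d := by
      calc (∑ i ∈ Finset.range d, t ^ i) ≤ ∑ i ∈ Finset.range d, (1:ℝ) := by
            apply Finset.sum_le_sum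
            intro i _
            calc t ^ i ≤ |t ^ i| := le_abs_self _
              _ = |t| ^ i := abs_pow t i
              _ ≤ 1 := pow_le_one₀ (abs_nonneg t) htabs
        _ = d := by simp
    nlinarith [h1, mul_nonneg (sub_nonneg.2 h2) (sub_nonneg.2 ht1)]
  rcases Nat.eq_zero_or_pos d with hd | hd
  · subst hd; norm_num
  · have hd1 : (1:ℝ) ≤ d := by exact_mod_cast hd
    have heps : (0:ℝ) ≤ ε ^ 2 := sq_nonneg ε
    have s1 : (d:ℝ) * (2 - 2*t) ≤ (d:ℝ) * ε ^ 2 :=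
      mul_le_mul_of_nonneg_left hde (by positivity)
    have hd2 : (d:ℝ) ≤ (d:ℝ) ^ 2 := by nlinarith
    have s2 : (d:ℝ) * ε ^ 2 ≤ (d:ℝ) ^ 2 * ε ^ 2 := mul_le_mul_of_nonneg_right hd2 heps
    nlinarith [hgeom, s1, s2]

/-- The Frobenius norm of `A − Ã`, where `A` (resp. `Ã`) is the matrix whose `i`-th column is
the polynomial `(a_i·x)^d` (resp. `(ã_i·x)^d`) written in the Bombieri orthonormal basis,
is at most `√N·d·ε`. -/
theorem stmt19 {n N d : ℕ} (ε : ℝ) (a at' : Fin N → (Fin n → ℝ))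
    (ha : ∀ i, ∑ j, a i j ^ 2 = 1) (hat : ∀ i, ∑ j, at' i j ^ 2 = 1)
    (hclose : ∀ i, Real.sqrt (∑ j, (a i j - at' i j) ^ 2) ≤ ε) :
    Real.sqrt (∑ i, bombieri d ((linForm (a i)) ^ d - (linForm (at' i)) ^ d)
        ((linForm (a i)) ^ d - (linForm (at' i)) ^ d)) ≤
      Real.sqrt N * d * ε := by
  rcases Nat.eq_zero_or_pos N with hN | hN
  · subst hN
    simp
  · have hε : 0 ≤ ε := le_trans (Real.sqrt_nonneg _) (hclose ⟨0, hN⟩)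
    have hbound : (∑ i, bombieri d ((linForm (a i)) ^ d - (linForm (at' i)) ^ d)
        ((linForm (a i)) ^ d - (linForm (at' i)) ^ d)) ≤ N * ((d:ℝ) ^ 2 * ε ^ 2) := by
      calc (∑ i, bombieri d ((linForm (a i)) ^ d - (linForm (at' i)) ^ d)
          ((linForm (a i)) ^ d - (linForm (at' i)) ^ d))
          ≤ ∑ _i : Fin N, (d:ℝ) ^ 2 * ε ^ 2 := by
            apply Finset.sum_le_sum
            intro i _
            exact bombieri_sub_le d ε (a i) (at' i) (ha i) (hat i) (hclose i)
        _ = N * ((d:ℝ) ^ 2 * ε ^ 2) := by simp [Finset.sum_const, nsmul_eq_mul]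
    calc Real.sqrt (∑ i, bombieri d ((linForm (a i)) ^ d - (linForm (at' i)) ^ d)
        ((linForm (a i)) ^ d - (linForm (at' i)) ^ d))
        ≤ Real.sqrt (N * ((d:ℝ) ^ 2 * ε ^ 2)) := Real.sqrt_le_sqrt hbound
      _ = Real.sqrt N * d * ε := by
          rw [show (N : ℝ) * ((d:ℝ)^2 * ε^2) = (N:ℝ) * ((d:ℝ) * ε)^2 from by ring,
            Real.sqrt_mul (Nat.cast_nonneg N), Real.sqrt_sq (by positivity)]
          ring
end
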